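/- arXiv:2111.12412 — 3 statements merged into one kernel-verified Lean document; each statement's English description precedes it below -/
import Mathlib

section
/- If G is an r-shallow minor of H ⊠ L ⊠ K_ℓ where H has treewidth at most t and the r-th power of L has maximum degree at most k, then G is contained in J ⊠ L^{2r+1} ⊠ K_{ℓ(k+1)} for some graph J of treewidth at most C(2r+1+t, t) − 1. -/
open SimpleGraph

variable {V W : Type}

/-- The strong product of two simple graphs. -/
def strongProd (G : SimpleGraph V) (H : SimpleGraph W) : SimpleGraph (V × W) where
  Adj a b := a ≠ b ∧ (a.1 = b.1 ∨ G.Adj a.1 b.1) ∧ (a.2 = b.2 ∨ H.Adj a.2 b.2)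
  symm := by
    constructor
    rintro a b ⟨hne, h1, h2⟩
    exact ⟨hne.symm, by tauto, by tauto⟩
  loopless := ⟨fun a h => h.1 rfl⟩

infixl:70 " ⊠ " => strongProd

/-- The lexicographic product of two simple graphs. -/
def lexProd (G : SimpleGraph V) (H : SimpleGraph W) : SimpleGraph (V × W) where
  Adj a b := G.Adj a.1 b.1 ∨ (a.1 = b.1 ∧ H.Adj a.2 b.2)
  symm := by
    constructor
    rintro a b (h | ⟨h, h'⟩)
    · exact Or.inl h.symm
    · exact Or.inr ⟨h.symm, h'.symm⟩
  loopless := by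
    constructor
    rintro a (h | ⟨_, h⟩)
    · exact G.loopless.irrefl _ h
    · exact H.loopless.irrefl _ h

/-- `G` is contained in `H`: `G` is isomorphic to a subgraph of `H`. -/
def Contains (G : SimpleGraph V) (H : SimpleGraph W) : Prop :=
  ∃ f : V → W, Function.Injective f ∧ ∀ ⦃u v⦄, G.Adj u v → H.Adj (f u) (f v)

/-- `(T, B)` is a tree-decomposition of `G`. -/
def IsTreeDecomp {ι : Type} (G : SimpleGraph V) (T : SimpleGraph ι) (B : ι → Set V) : Prop :=
  T.IsTree ∧
  (∀ ⦃u v⦄, G.Adj u v → ∃ i, u ∈ B i ∧ v ∈ B i) ∧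
  (∀ v : V, (T.induce {i | v ∈ B i}).Connected)

/-- The treewidth of `G` is at most `t`. -/
def TreewidthLE (G : SimpleGraph V) (t : ℕ) : Prop :=
  ∃ (ι : Type) (T : SimpleGraph ι) (B : ι → Set V),
    IsTreeDecomp G T B ∧ ∀ i, (B i).Finite ∧ (B i).ncard ≤ t + 1

/-- The row treewidth of `G` is at most `t`: `G` is contained in `H ⊠ P`
for some graph `H` of treewidth at most `t` and some path `P`. -/
def RowTreewidthLE (G : SimpleGraph V) (t : ℕ) : Prop :=
  ∃ (ι : Type) (H : SimpleGraph ι) (n : ℕ),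
    TreewidthLE H t ∧ Contains G (H ⊠ pathGraph n)

/-- `μ` is a model of an `r`-shallow minor `H` in `G`: branch sets are connected,
pairwise disjoint, of radius at most `r`, with adjacent branch sets for each edge of `H`. -/
def IsShallowMinorModel (H : SimpleGraph W) (G : SimpleGraph V) (r : ℕ) (μ : W → Set V) : Prop :=
  (∀ w, (G.induce (μ w)).Connected) ∧
  (∀ w, ∃ c : μ w, ∀ u : μ w, (G.induce (μ w)).dist c u ≤ r) ∧
  (Pairwise fun w w' => Disjoint (μ w) (μ w')) ∧
  (∀ ⦃w w'⦄, H.Adj w w' → ∃ u ∈ μ w, ∃ v ∈ μ w', G.Adj u v)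

/-- `H` is an `r`-shallow minor of `G`. -/
def ShallowMinor (H : SimpleGraph W) (G : SimpleGraph V) (r : ℕ) : Prop :=
  ∃ μ : W → Set V, IsShallowMinorModel H G r μ

/-- `H` is an `(m/2)`-shallow topological minor of `G`: a subgraph of `G` is an
`m`-subdivision of `H`, i.e. each edge of `H` is replaced by a path of length at most `m+1`,
and these paths are internally disjoint. -/
def ShallowTopMinor (H : SimpleGraph W) (G : SimpleGraph V) (m : ℕ) : Prop :=
  ∃ f : W → V, Function.Injective f ∧
  ∃ P : ∀ ⦃u v⦄, H.Adj u v → G.Walk (f u) (f v),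
    (∀ ⦃u v⦄ (h : H.Adj u v), (P h).IsPath ∧ (P h).length ≤ m + 1 ∧
      ∀ x ∈ (P h).support, x ∈ Set.range f → (x = f u ∨ x = f v)) ∧
    (∀ ⦃u v x y⦄ (h₁ : H.Adj u v) (h₂ : H.Adj x y), s(u,v) ≠ s(x,y) →
      ∀ z ∈ (P h₁).support, z ∈ (P h₂).support →
        (z = f u ∨ z = f v) ∧ (z = f x ∨ z = f y))

/-- The `s`-th power of a graph: vertices at distance at most `s` are adjacent. -/
def powG (G : SimpleGraph V) (s : ℕ) : SimpleGraph V where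
  Adj u v := u ≠ v ∧ ∃ p : G.Walk u v, p.length ≤ s
  symm := by
    constructor
    rintro u v ⟨h, p, hp⟩
    exact ⟨h.symm, p.reverse, by simpa using hp⟩
  loopless := ⟨fun v h => h.1 rfl⟩

/-- The maximum degree of `G` is at most `d`. -/
def MaxDegLE (G : SimpleGraph V) (d : ℕ) : Prop :=
  ∀ v, (G.neighborSet v).Finite ∧ (G.neighborSet v).ncard ≤ d


namespace ShallowAux



open Finset

/-- Hockey stick. -/
lemma hockey (n : ℕ) : ∀ (M : ℕ),
    ∑ g ∈ Finset.range (M+1), Nat.choose (n+g) g = Nat.choose (n+M+1) M := by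
  intro M
  induction M with
  | zero => simp
  | succ M ih =>
      rw [Finset.sum_range_succ, ih]
      have h1 : n + (M+1) + 1 = (n + M + 1) + 1 := by ring
      have h2 : n + (M+1) = (n + M) + 1 := by ring
      rw [h1, Nat.choose_succ_succ']
      have h3 : (n + M + 1).choose (M + 1) = (n + (M+1)).choose (M+1) := by rw [h2]
      omega

/-- The bound function for the counting lemma. `tt` plays the role of the width. -/
def BB (tt : ℕ) : ℕ → ℕ → ℕ → ℕ
  | 0, c, d => tt + 1 - c - d
  | (i+1), c, d => (tt + 1 - c - d) + ∑ e ∈ Finset.range (tt+1-c-d), BB tt i (c+e) 1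

lemma choose_succ_self' (m : ℕ) : Nat.choose (m+1) m = m + 1 :=
  Nat.choose_succ_self_right m

lemma BB_one (tt : ℕ) : ∀ (i m : ℕ), m ≤ tt → BB tt i (tt - m) 1 + 1 = Nat.choose (i+1+m) m := by
  intro i
  induction i with
  | zero =>
      intro m hm
      show (tt + 1 - (tt - m) - 1) + 1 = _
      have h1 : tt + 1 - (tt - m) - 1 = m := by omega
      have h2 : 0 + 1 + m = m + 1 := by ring
      rw [h1, h2, choose_succ_self']
  | succ i ih =>
      intro m hm
      show (tt + 1 - (tt - m) - 1) + (∑ e ∈ Finset.range (tt+1-(tt-m)-1), BB tt i ((tt-m)+e) 1) + 1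
            = Nat.choose (i+1+1+m) m
      have h1 : tt + 1 - (tt - m) - 1 = m := by omega
      rw [h1]
      have hsplit := Finset.sum_add_distrib (s := Finset.range m)
        (f := fun e => BB tt i ((tt-m)+e) 1) (g := fun _ => 1)
      have hone : (∑ _e ∈ Finset.range m, (1:ℕ)) = m := by simp
      have hsum : (∑ e ∈ Finset.range m, (BB tt i ((tt-m)+e) 1 + 1))
            = ∑ e ∈ Finset.range m, Nat.choose (i+1+(m-e)) (m-e) := by
        apply Finset.sum_congr rfl
        intro e he
        rw [Finset.mem_range] at he
        have h3 : (tt - m) + e = tt - (m - e) := by omega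
        rw [h3, ih (m-e) (by omega)]
      have hrefl : ∑ e ∈ Finset.range m, Nat.choose (i+1+(m-e)) (m-e)
            = ∑ g ∈ Finset.range m, Nat.choose (i+1+(g+1)) (g+1) := by
        rw [← Finset.sum_range_reflect (fun g => Nat.choose (i+1+(g+1)) (g+1)) m]
        apply Finset.sum_congr rfl
        intro e he
        rw [Finset.mem_range] at he
        congr 1 <;> omega
      have hhs := hockey (i+1) m
      rw [Finset.sum_range_succ'] at hhs
      simp only [Nat.add_zero, Nat.choose_zero_right] at hhs
      have hc : (i+1+m+1).choose m = (i+1+1+m).choose m := by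
        congr 1; ring
      omega
  
lemma BB_top (tt : ℕ) : ∀ (i : ℕ), BB tt i 0 0 = Nat.choose (i+tt+1) tt := by
  intro i
  cases i with
  | zero =>
      show tt + 1 - 0 - 0 = _
      have : 0 + tt + 1 = tt + 1 := by ring
      rw [this, choose_succ_self']
      omega
  | succ i =>
      show (tt + 1 - 0 - 0) + ∑ e ∈ Finset.range (tt+1-0-0), BB tt i (0+e) 1 = _
      simp only [Nat.sub_zero, Nat.zero_add]
      have hsplit := Finset.sum_add_distrib (s := Finset.range (tt+1))
        (f := fun e => BB tt i e 1) (g := fun _ => 1)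
      have hone : (∑ _e ∈ Finset.range (tt+1), (1:ℕ)) = tt+1 := by simp
      have hsum : (∑ e ∈ Finset.range (tt+1), (BB tt i e 1 + 1))
            = ∑ e ∈ Finset.range (tt+1), Nat.choose (i+1+(tt-e)) (tt-e) := by
        apply Finset.sum_congr rfl
        intro e he
        rw [Finset.mem_range] at he
        have h3 : e = tt - (tt - e) := by omega
        conv_lhs => rw [h3]
        rw [BB_one tt i (tt - e) (by omega)]
      have hrefl : ∑ e ∈ Finset.range (tt+1), Nat.choose (i+1+(tt-e)) (tt-e)
            = ∑ g ∈ Finset.range (tt+1), Nat.choose (i+1+g) g := by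
        rw [← Finset.sum_range_reflect (fun g => Nat.choose (i+1+g) g) (tt+1)]
        apply Finset.sum_congr rfl
        intro e he
        rw [Finset.mem_range] at he
        congr 1 <;> omega
      have hhs := hockey (i+1) tt
      omega



section Counting

variable {Λ : Type} (pt : Λ → Set ℕ) (av : Λ → ℕ)

/-- Reachable intervals: from point `n` with `i` jumps allowed. -/
def REACH : ℕ → ℕ → Set Λ
  | 0, n => {l | n ∈ pt l}
  | (i+1), n => {l | n ∈ pt l} ∪ ⋃ (w : Λ) (_ : n ∈ pt w ∧ av w < n), REACH i (av w)

lemma REACH_mono : ∀ (i n : ℕ), REACH pt av i n ⊆ REACH pt av (i+1) n := by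
  intro i
  induction i with
  | zero => intro n x hx; exact Or.inl hx
  | succ i ih =>
      intro n x hx
      rcases hx with hx | hx
      · exact Or.inl hx
      · simp only [Set.mem_iUnion] at hx
        obtain ⟨w, hw, hxw⟩ := hx
        refine Or.inr ?_
        simp only [Set.mem_iUnion]
        exact ⟨w, hw, ih (av w) hxw⟩

variable (tt : ℕ)
variable (Hconv : ∀ l n m, n ∈ pt l → av l ≤ m → m ≤ n → m ∈ pt l)
variable (Hcov : ∀ n, ({l | n ∈ pt l}).Finite ∧ ({l | n ∈ pt l}).ncard ≤ tt+1)

include Hconv Hcov in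
lemma SC : ∀ (i : ℕ) (g : ℕ) (A : Set Λ) (S E : Finset Λ),
    (↑S ⊆ A) → (↑E ⊆ A) →
    (∀ l ∈ S, g ∈ pt l ∧ av l < g ∧ REACH pt av i (av l) ⊆ A) →
    (∀ l ∈ E, g ∈ pt l ∧ av l = g) →
    (REACH pt av i g \ A).Finite ∧ (REACH pt av i g \ A).ncard ≤ BB tt i S.card E.card := by
  classical
  intro i
  induction i with
  | zero =>
      intro g A S E hSA hEA hS hE
      have hsub : REACH pt av 0 g \ A ⊆ {l | g ∈ pt l} := fun x hx => hx.1
      have hfin : (REACH pt av 0 g \ A).Finite := (Hcov g).1.subset hsub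
      refine ⟨hfin, ?_⟩
      have hSE : (↑(S ∪ E) : Set Λ) ⊆ {l | g ∈ pt l} := by
        intro l hl
        rcases Finset.mem_union.1 (by exact_mod_cast hl) with h | h
        · exact (hS l h).1
        · exact (hE l h).1
      have hdisj : Disjoint S E := by
        rw [Finset.disjoint_left]
        intro l hlS hlE
        exact absurd (hE l hlE).2 (ne_of_lt (hS l hlS).2.1)
      have hsub2 : REACH pt av 0 g \ A ⊆ {l | g ∈ pt l} \ ↑(S ∪ E) := by
        rintro x ⟨hx, hxA⟩
        refine ⟨hx, fun hc => hxA ?_⟩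
        rcases Finset.mem_union.1 (by exact_mod_cast hc) with h | h
        · exact hSA h
        · exact hEA h
      calc (REACH pt av 0 g \ A).ncard
          ≤ ({l | g ∈ pt l} \ ↑(S ∪ E)).ncard :=
            Set.ncard_le_ncard hsub2 ((Hcov g).1.diff)
        _ = ({l | g ∈ pt l}).ncard - (↑(S ∪ E) : Set Λ).ncard :=
            Set.ncard_diff hSE ((Hcov g).1.subset hSE)
        _ ≤ tt + 1 - S.card - E.card := by
            rw [Set.ncard_coe_finset, Finset.card_union_of_disjoint hdisj]
            have := (Hcov g).2
            omega
  | succ i ih =>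
      intro g A S E hSA hEA hS hE
      set D : Set Λ := {l | g ∈ pt l} with hD
      have hDfin : D.Finite := (Hcov g).1
      have hDcard : D.ncard ≤ tt + 1 := (Hcov g).2
      -- inner helper: process a sorted list of surviving target points
      have helper : ∀ (L : List ℕ), L.Pairwise (· < ·) →
          ∀ (A' : Set Λ) (S' : Finset Λ),
          (∀ τ ∈ L, τ < g ∧ ∃ w, w ∈ A' ∧ g ∈ pt w ∧ av w = τ) →
          (↑S' ⊆ A') →
          (∀ l ∈ S', g ∈ pt l ∧ (∀ τ ∈ L, av l < τ) ∧ REACH pt av i (av l) ⊆ A') →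
          ((⋃ τ ∈ L, REACH pt av i τ) \ A').Finite ∧
            ((⋃ τ ∈ L, REACH pt av i τ) \ A').ncard
              ≤ ∑ e ∈ Finset.range L.length, BB tt i (S'.card + e) 1 := by
        intro L
        induction L with
        | nil =>
            intro _ A' S' _ _ _
            simp
        | cons τ L' ihL =>
            intro hpair A' S' hwit hS'A hS'
            obtain ⟨hτg, w, hwA, hwpt, hwav⟩ := hwit τ (by simp)
            have hτptw : τ ∈ pt w := Hconv w g τ hwpt (le_of_eq hwav) (le_of_lt hτg)
            -- first branch at point τ
            have hfirst := ih τ A' S' {w} hS'A (by simpa using hwA)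
              (fun l hl =>
                ⟨Hconv l g τ (hS' l hl).1 (le_of_lt ((hS' l hl).2.1 τ (by simp)))
                    (le_of_lt hτg),
                  (hS' l hl).2.1 τ (by simp), (hS' l hl).2.2⟩)
              (by
                intro l hl
                rw [Finset.mem_singleton] at hl
                subst hl
                exact ⟨hτptw, hwav⟩)
            rw [Finset.card_singleton] at hfirst
            -- rest of the list
            have hwS' : w ∉ S' := by
              intro hc
              exact absurd hwav (ne_of_lt ((hS' w hc).2.1 τ (by simp)))
            have hrest := ihL hpair.of_cons (A' ∪ REACH pt av i τ) (insert w S')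
              (by
                intro τ' hτ'
                obtain ⟨h1, w', hw'A, h2, h3⟩ := hwit τ' (List.mem_cons_of_mem _ hτ')
                exact ⟨h1, w', Or.inl hw'A, h2, h3⟩)
              (by
                intro l hl
                rcases Finset.mem_insert.1 (by exact_mod_cast hl) with h | h
                · subst h; exact Or.inl hwA
                · exact Or.inl (hS'A h))
              (by
                intro l hl
                rcases Finset.mem_insert.1 hl with h | h
                · subst h
                  refine ⟨hwpt, ?_, ?_⟩
                  · intro τ' hτ'
                    rw [hwav]
                    exact List.rel_of_pairwise_cons hpair hτ'
                  · rw [hwav]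
                    exact fun x hx => Or.inr hx
                · refine ⟨(hS' l h).1, ?_, fun x hx => Or.inl ((hS' l h).2.2 hx)⟩
                  intro τ' hτ'
                  exact (hS' l h).2.1 τ' (List.mem_cons_of_mem _ hτ'))
            rw [Finset.card_insert_of_notMem hwS'] at hrest
            -- combine
            have hsplit : (⋃ τ'' ∈ (τ :: L'), REACH pt av i τ'') \ A'
                ⊆ (REACH pt av i τ \ A') ∪
                  ((⋃ τ'' ∈ L', REACH pt av i τ'') \ (A' ∪ REACH pt av i τ)) := by
              rintro x ⟨hx, hxA⟩
              simp only [Set.mem_iUnion, List.mem_cons] at hx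
              obtain ⟨τ'', hτ'', hxτ⟩ := hx
              rcases hτ'' with rfl | hτ''
              · exact Or.inl ⟨hxτ, hxA⟩
              · by_cases hxR : x ∈ REACH pt av i τ
                · exact Or.inl ⟨hxR, hxA⟩
                · refine Or.inr ⟨?_, ?_⟩
                  · simp only [Set.mem_iUnion]; exact ⟨τ'', hτ'', hxτ⟩
                  · rintro (h | h) <;> [exact hxA h; exact hxR h]
            have hfin : ((⋃ τ'' ∈ (τ :: L'), REACH pt av i τ'') \ A').Finite :=
              (hfirst.1.union hrest.1).subset hsplit
            refine ⟨hfin, ?_⟩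
            calc ((⋃ τ'' ∈ (τ :: L'), REACH pt av i τ'') \ A').ncard
                ≤ ((REACH pt av i τ \ A') ∪
                    ((⋃ τ'' ∈ L', REACH pt av i τ'') \ (A' ∪ REACH pt av i τ))).ncard :=
                  Set.ncard_le_ncard hsplit (hfirst.1.union hrest.1)
              _ ≤ (REACH pt av i τ \ A').ncard +
                    ((⋃ τ'' ∈ L', REACH pt av i τ'') \ (A' ∪ REACH pt av i τ)).ncard :=
                  Set.ncard_union_le _ _
              _ ≤ BB tt i S'.card 1 +
                    ∑ e ∈ Finset.range L'.length, BB tt i (S'.card + 1 + e) 1 :=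
                  Nat.add_le_add hfirst.2 hrest.2
              _ = ∑ e ∈ Finset.range (τ :: L').length, BB tt i (S'.card + e) 1 := by
                  rw [List.length_cons, Finset.sum_range_succ']
                  have : ∀ e, BB tt i (S'.card + (e+1)) 1 = BB tt i (S'.card + 1 + e) 1 := by
                    intro e; congr 1; ring
                  simp only [this, Nat.add_zero]
                  ring
      -- now the main step
      set DF : Finset Λ := hDfin.toFinset with hDF
      set TGT : Finset ℕ := (DF.filter (fun l => av l < g)).image av with hTGT
      set SURV : Finset ℕ := TGT.filter (fun τ => ∀ l ∈ S, av l < τ) with hSURV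
      set L : List ℕ := SURV.sort (· ≤ ·) with hL
      have hLpair : L.Pairwise (· < ·) := (Finset.sortedLT_sort SURV).pairwise
      have hmemL : ∀ τ, τ ∈ L ↔ τ ∈ SURV := fun τ => Finset.mem_sort _
      have hTGTmem : ∀ τ ∈ TGT, τ < g ∧ ∃ w, w ∈ D ∧ g ∈ pt w ∧ av w = τ := by
        intro τ hτ
        rw [hTGT, Finset.mem_image] at hτ
        obtain ⟨w, hw, rfl⟩ := hτ
        rw [Finset.mem_filter] at hw
        have hwD : w ∈ D := by
          have := hw.1
          rwa [hDF, Set.Finite.mem_toFinset] at this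
        exact ⟨hw.2, w, hwD, hwD, rfl⟩
      -- absorption of non-surviving targets
      have habs : ∀ τ ∈ TGT, τ ∉ SURV → REACH pt av i τ ⊆ A := by
        intro τ hτT hτS
        rw [hSURV, Finset.mem_filter] at hτS
        push_neg at hτS
        obtain ⟨lS, hlS, hle⟩ := hτS hτT
        obtain ⟨hτg, w, hwD, hwpt, hwav⟩ := hTGTmem τ hτT
        rcases eq_or_lt_of_le hle with heq | hlt
        · -- τ = av lS
          have : REACH pt av i τ ⊆ REACH pt av (i+1) (av lS) := by
            rw [← heq]; exact REACH_mono pt av i τ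
          exact this.trans (hS lS hlS).2.2
        · -- τ < av lS : go through branch w from point av lS
          have hsub : REACH pt av i τ ⊆ REACH pt av (i+1) (av lS) := by
            intro x hx
            refine Or.inr ?_
            simp only [Set.mem_iUnion]
            refine ⟨w, ⟨?_, by rw [hwav]; exact hlt⟩, by rwa [hwav]⟩
            exact Hconv w g (av lS) hwpt (by omega) (le_of_lt (hS lS hlS).2.1)
          exact hsub.trans (hS lS hlS).2.2
      -- decomposition
      have hdec : REACH pt av (i+1) g \ A ⊆
          (D \ A) ∪ ((⋃ τ ∈ L, REACH pt av i τ) \ (A ∪ D)) := by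
        rintro x ⟨hx, hxA⟩
        rcases hx with hx | hx
        · exact Or.inl ⟨hx, hxA⟩
        · simp only [Set.mem_iUnion] at hx
          obtain ⟨w, ⟨hwpt, hwlt⟩, hxw⟩ := hx
          by_cases hxD : x ∈ D
          · exact Or.inl ⟨hxD, hxA⟩
          · have hwTGT : av w ∈ TGT := by
              rw [hTGT, Finset.mem_image]
              refine ⟨w, ?_, rfl⟩
              rw [Finset.mem_filter]
              exact ⟨by rw [hDF, Set.Finite.mem_toFinset]; exact hwpt, hwlt⟩
            by_cases hwS : av w ∈ SURV
            · refine Or.inr ⟨?_, ?_⟩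
              · simp only [Set.mem_iUnion]
                exact ⟨av w, (hmemL (av w)).2 hwS, hxw⟩
              · rintro (h | h) <;> [exact hxA h; exact hxD h]
            · exact absurd (habs (av w) hwTGT hwS hxw) hxA
      -- helper application
      have hHelp := helper L hLpair (A ∪ D) S
        (by
          intro τ hτ
          obtain ⟨h1, w, hwD, h2, h3⟩ := hTGTmem τ (Finset.mem_of_mem_filter τ ((hmemL τ).1 hτ))
          exact ⟨h1, w, Or.inr hwD, h2, h3⟩)
        (fun l hl => Or.inl (hSA hl))
        (by
          intro l hl
          refine ⟨(hS l hl).1, ?_, ?_⟩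
          · intro τ hτ
            have := (hmemL τ).1 hτ
            rw [hSURV, Finset.mem_filter] at this
            exact this.2 l hl
          · exact fun x hx => Or.inl ((hS l hl).2.2 (REACH_mono pt av i (av l) hx)))
      -- cardinality of SURV
      have hdisjSE : Disjoint S E := by
        rw [Finset.disjoint_left]
        intro l hlS hlE
        exact absurd (hE l hlE).2 (ne_of_lt (hS l hlS).2.1)
      have hSEsub : S ∪ E ⊆ DF := by
        intro l hl
        rw [hDF, Set.Finite.mem_toFinset]
        rcases Finset.mem_union.1 hl with h | h
        · exact (hS l h).1
        · exact (hE l h).1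
      have hsurvcard : SURV.card ≤ tt + 1 - S.card - E.card := by
        have hsub : SURV ⊆ (DF \ (S ∪ E)).image av := by
          intro τ hτ
          have hτT := Finset.mem_of_mem_filter τ hτ
          obtain ⟨hτg, w, hwD, hwpt, hwav⟩ := hTGTmem τ hτT
          rw [Finset.mem_image]
          refine ⟨w, Finset.mem_sdiff.2 ⟨by rw [hDF, Set.Finite.mem_toFinset]; exact hwD, ?_⟩, hwav⟩
          intro hc
          rcases Finset.mem_union.1 hc with h | h
          · rw [hSURV, Finset.mem_filter] at hτ
            exact absurd hwav (ne_of_lt (hτ.2 w h))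
          · have h2 := (hE w h).2
            omega
        calc SURV.card ≤ ((DF \ (S ∪ E)).image av).card := Finset.card_le_card hsub
          _ ≤ (DF \ (S ∪ E)).card := Finset.card_image_le
          _ = DF.card - (S ∪ E).card := Finset.card_sdiff_of_subset hSEsub
          _ ≤ tt + 1 - S.card - E.card := by
              have hDFcard : DF.card = D.ncard := by
                rw [hDF]; exact (Set.ncard_eq_toFinset_card D hDfin).symm
              rw [Finset.card_union_of_disjoint hdisjSE]
              omega
      -- bound on the bag part
      have hbag : (D \ A).ncard ≤ tt + 1 - S.card - E.card := by
        have hSE : (↑(S ∪ E) : Set Λ) ⊆ D := by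
          intro l hl
          rcases Finset.mem_union.1 (by exact_mod_cast hl) with h | h
          · exact (hS l h).1
          · exact (hE l h).1
        have hsub2 : D \ A ⊆ D \ ↑(S ∪ E) := by
          rintro x ⟨hx, hxA⟩
          refine ⟨hx, fun hc => hxA ?_⟩
          rcases Finset.mem_union.1 (by exact_mod_cast hc) with h | h
          · exact hSA h
          · exact hEA h
        calc (D \ A).ncard ≤ (D \ ↑(S ∪ E)).ncard := Set.ncard_le_ncard hsub2 (hDfin.diff)
          _ = D.ncard - (↑(S ∪ E) : Set Λ).ncard := Set.ncard_diff hSE (hDfin.subset hSE)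
          _ ≤ tt + 1 - S.card - E.card := by
              rw [Set.ncard_coe_finset, Finset.card_union_of_disjoint hdisjSE]
              omega
      -- final assembly
      have hLlen : L.length = SURV.card := Finset.length_sort _
      have hfinal : (REACH pt av (i+1) g \ A).Finite :=
        ((hDfin.diff).union hHelp.1).subset hdec
      refine ⟨hfinal, ?_⟩
      calc (REACH pt av (i+1) g \ A).ncard
          ≤ ((D \ A) ∪ ((⋃ τ ∈ L, REACH pt av i τ) \ (A ∪ D))).ncard :=
            Set.ncard_le_ncard hdec ((hDfin.diff).union hHelp.1)
        _ ≤ (D \ A).ncard + ((⋃ τ ∈ L, REACH pt av i τ) \ (A ∪ D)).ncard :=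
            Set.ncard_union_le _ _
        _ ≤ (tt + 1 - S.card - E.card) + ∑ e ∈ Finset.range L.length, BB tt i (S.card + e) 1 :=
            Nat.add_le_add hbag hHelp.2
        _ ≤ (tt + 1 - S.card - E.card) +
              ∑ e ∈ Finset.range (tt + 1 - S.card - E.card), BB tt i (S.card + e) 1 := by
            refine Nat.add_le_add_left ?_ _
            refine Finset.sum_le_sum_of_subset ?_
            intro e he
            rw [Finset.mem_range] at he ⊢
            omega
        _ = BB tt (i+1) S.card E.card := rfl

include Hconv Hcov in
lemma COUNT (j n : ℕ) :
    (REACH pt av j n).Finite ∧ (REACH pt av j n).ncard ≤ Nat.choose (j+tt+1) tt := by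
  have h := SC pt av tt Hconv Hcov j n ∅ ∅ ∅ (by simp) (by simp) (by simp) (by simp)
  rw [Set.diff_empty] at h
  simpa [BB_top tt j] using h

end Counting






section Tree

variable {ιT : Type} [DecidableEq ιT] {T : SimpleGraph ιT} (hT : T.IsTree) (ρ : ιT)

/-- The unique path from the root to `x`. -/
noncomputable def pth (x : ιT) : T.Walk ρ x := (hT.existsUnique_path ρ x).choose

lemma pth_isPath (x : ιT) : (pth hT ρ x).IsPath := (hT.existsUnique_path ρ x).choose_spec.1

lemma pth_unique {x : ιT} (p : T.Walk ρ x) (hp : p.IsPath) : p = pth hT ρ x :=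
  (hT.existsUnique_path ρ x).choose_spec.2 p hp

/-- Ancestor relation (relative to root `ρ`). -/
def anc (x y : ιT) : Prop := x ∈ (pth hT ρ y).support

/-- Depth. -/
noncomputable def dpt (x : ιT) : ℕ := (pth hT ρ x).length

lemma anc_refl (x : ιT) : anc hT ρ x x := SimpleGraph.Walk.end_mem_support _

lemma anc_root (x : ιT) : anc hT ρ ρ x := SimpleGraph.Walk.start_mem_support _

lemma takeUntil_eq_pth {x y : ιT} (h : anc hT ρ x y) :
    (pth hT ρ y).takeUntil x h = pth hT ρ x :=
  pth_unique hT ρ _ ((pth_isPath hT ρ y).takeUntil h)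

lemma anc_trans {x y z : ιT} (hxy : anc hT ρ x y) (hyz : anc hT ρ y z) : anc hT ρ x z := by
  have h1 := takeUntil_eq_pth hT ρ hyz
  have h2 := SimpleGraph.Walk.support_takeUntil_subset (pth hT ρ z) hyz
  rw [h1] at h2
  exact h2 hxy

lemma dpt_le_of_anc {x y : ιT} (h : anc hT ρ x y) : dpt hT ρ x ≤ dpt hT ρ y := by
  have h1 := takeUntil_eq_pth hT ρ h
  have h2 := SimpleGraph.Walk.length_takeUntil_le (pth hT ρ y) h
  rw [h1] at h2
  exact h2

lemma dpt_decomp {x y : ιT} (h : anc hT ρ x y) :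
    dpt hT ρ y = dpt hT ρ x + ((pth hT ρ y).dropUntil x h).length := by
  have h0 : ((pth hT ρ y).takeUntil x h).append ((pth hT ρ y).dropUntil x h) = pth hT ρ y :=
    SimpleGraph.Walk.take_spec _ h
  have h1 : dpt hT ρ y
      = (((pth hT ρ y).takeUntil x h).append ((pth hT ρ y).dropUntil x h)).length := by
    rw [h0]; rfl
  rw [h1, SimpleGraph.Walk.length_append]
  congr 1
  rw [takeUntil_eq_pth hT ρ h]
  rfl

lemma anc_antisymm {x y : ιT} (hxy : anc hT ρ x y) (hyx : anc hT ρ y x) : x = y := by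
  have h1 := dpt_decomp hT ρ hxy
  have h2 := dpt_decomp hT ρ hyx
  have h3 : ((pth hT ρ y).dropUntil x hxy).length = 0 := by omega
  exact SimpleGraph.Walk.eq_of_length_eq_zero h3

lemma dpt_lt_of_anc_ne {x y : ιT} (h : anc hT ρ x y) (hne : x ≠ y) :
    dpt hT ρ x < dpt hT ρ y := by
  have h1 := dpt_decomp hT ρ h
  rcases Nat.eq_zero_or_pos ((pth hT ρ y).dropUntil x h).length with h0 | h0
  · exact absurd (SimpleGraph.Walk.eq_of_length_eq_zero h0) hne
  · omega

lemma anc_eq_of_dpt_eq {x y : ιT} (hxy : anc hT ρ x y) (hd : dpt hT ρ x = dpt hT ρ y) :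
    x = y := by
  by_contra hne
  exact absurd hd (ne_of_lt (dpt_lt_of_anc_ne hT ρ hxy hne))

lemma pth_root : pth hT ρ ρ = SimpleGraph.Walk.nil := (pth_unique hT ρ _ (by simp)).symm

/-- Parent decomposition: a non-root vertex's root-path ends with an edge from its parent. -/
lemma parent_decomp {x : ιT} (hx : x ≠ ρ) :
    ∃ (w : ιT) (e : T.Adj w x), pth hT ρ x = (pth hT ρ w).concat e := by
  obtain ⟨v, e, p', hp⟩ := SimpleGraph.Walk.exists_eq_cons_of_ne hx (pth hT ρ x).reverse
  -- e : T.Adj x v, p' : T.Walk v ρ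
  have hx2 : pth hT ρ x = p'.reverse.concat e.symm := by
    have := congrArg SimpleGraph.Walk.reverse hp
    rw [SimpleGraph.Walk.reverse_reverse] at this
    rw [this, SimpleGraph.Walk.reverse_cons]
    exact (SimpleGraph.Walk.concat_eq_append _ _).symm
  have hp' : p'.reverse.IsPath := by
    have h1 : ((pth hT ρ x).reverse).IsPath := (pth_isPath hT ρ x).reverse
    rw [hp] at h1
    exact (h1.of_cons).reverse
  have : p'.reverse = pth hT ρ v := pth_unique hT ρ _ hp'
  exact ⟨v, e.symm, by rw [hx2, this]⟩

lemma concat_isPath {u v w : ιT} (p : T.Walk u v) (e : T.Adj v w) (hp : p.IsPath)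
    (hw : w ∉ p.support) : (p.concat e).IsPath := by
  rw [SimpleGraph.Walk.isPath_def, SimpleGraph.Walk.support_concat]
  refine List.Nodup.append (SimpleGraph.Walk.isPath_def _ |>.1 hp) (by simp) ?_
  intro a ha hb
  simp only [List.mem_singleton] at hb
  subst hb
  exact hw ha

/-- Edge dichotomy: for a tree edge, one endpoint is the parent of the other. -/
lemma edge_dichotomy {x y : ιT} (e : T.Adj x y) :
    (anc hT ρ x y ∧ dpt hT ρ y = dpt hT ρ x + 1) ∨
      (anc hT ρ y x ∧ dpt hT ρ x = dpt hT ρ y + 1) := by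
  by_cases hy : y ∈ (pth hT ρ x).support
  · right
    -- the piece from y to x is a path, hence equals the one-edge path
    have hD : ((pth hT ρ x).dropUntil y hy).IsPath := (pth_isPath hT ρ x).dropUntil hy
    have hE : (SimpleGraph.Walk.cons e.symm SimpleGraph.Walk.nil : T.Walk y x).IsPath := by
      rw [SimpleGraph.Walk.cons_isPath_iff]
      exact ⟨SimpleGraph.Walk.IsPath.nil, by simp [e.ne']⟩
    have huniq := hT.IsAcyclic.path_unique ⟨(pth hT ρ x).dropUntil y hy, hD⟩
      ⟨SimpleGraph.Walk.cons e.symm SimpleGraph.Walk.nil, hE⟩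
    have hval : (pth hT ρ x).dropUntil y hy = SimpleGraph.Walk.cons e.symm SimpleGraph.Walk.nil :=
      congrArg Subtype.val huniq
    have hd := dpt_decomp hT ρ hy
    rw [hval] at hd
    simp only [SimpleGraph.Walk.length_cons, SimpleGraph.Walk.length_nil] at hd
    exact ⟨hy, by omega⟩
  · left
    have hpath : ((pth hT ρ x).concat e).IsPath := concat_isPath _ e (pth_isPath hT ρ x) hy
    have heq : (pth hT ρ x).concat e = pth hT ρ y := pth_unique hT ρ _ hpath
    constructor
    · show x ∈ (pth hT ρ y).support
      rw [← heq, SimpleGraph.Walk.support_concat]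
      exact List.mem_append_left _ (SimpleGraph.Walk.end_mem_support _)
    · show (pth hT ρ y).length = (pth hT ρ x).length + 1
      rw [← heq, SimpleGraph.Walk.length_concat]

lemma support_parent {x w : ιT} (e : T.Adj w x) (h : pth hT ρ x = (pth hT ρ w).concat e) :
    ∀ z, z ∈ (pth hT ρ x).support ↔ (z ∈ (pth hT ρ w).support ∨ z = x) := by
  intro z
  rw [h, SimpleGraph.Walk.support_concat]
  simp

/-- Two ancestors of the same vertex are comparable. -/
lemma anc_comparable : ∀ (n : ℕ) (z x y : ιT), dpt hT ρ z = n →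
    anc hT ρ x z → anc hT ρ y z → anc hT ρ x y ∨ anc hT ρ y x := by
  intro n
  induction n using Nat.strong_induction_on with
  | _ n ih =>
    intro z x y hdz hx hy
    by_cases hxz : x = z
    · subst hxz; exact Or.inr hy
    by_cases hyz : y = z
    · subst hyz; exact Or.inl hx
    have hzρ : z ≠ ρ := by
      rintro rfl
      simp only [anc, pth_root] at hx
      simp at hx
      exact hxz hx
    obtain ⟨w, e, hdecomp⟩ := parent_decomp hT ρ hzρ
    have hxw : anc hT ρ x w := by
      have := (support_parent hT ρ e hdecomp x).1 hx
      rcases this with h | h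
      · exact h
      · exact absurd h hxz
    have hyw : anc hT ρ y w := by
      have := (support_parent hT ρ e hdecomp y).1 hy
      rcases this with h | h
      · exact h
      · exact absurd h hyz
    have hdw : dpt hT ρ w < n := by
      have : dpt hT ρ z = dpt hT ρ w + 1 := by
        show (pth hT ρ z).length = (pth hT ρ w).length + 1
        rw [hdecomp, SimpleGraph.Walk.length_concat]
      omega
    exact ih (dpt hT ρ w) hdw w x y rfl hxw hyw

/-- inclusion homomorphism from an induced subgraph -/
def inclHom (S : Set ιT) : T.induce S →g T where
  toFun := Subtype.val
  map_rel' := fun {a b} hab => hab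

/-- Convexity: a connected set of nodes contains every node between two of its members. -/
lemma convex_of_connected {S : Set ιT} (hconn : (T.induce S).Connected)
    {n₁ n₂ n₃ : ιT} (h12 : anc hT ρ n₁ n₂) (h23 : anc hT ρ n₂ n₃)
    (h1 : n₁ ∈ S) (h3 : n₃ ∈ S) : n₂ ∈ S := by
  have h13 : anc hT ρ n₁ n₃ := anc_trans hT ρ h12 h23
  set Dw := (pth hT ρ n₃).dropUntil n₁ h13 with hDw
  have hDpath : Dw.IsPath := (pth_isPath hT ρ n₃).dropUntil h13
  -- n₂ is on Dw
  have hn2 : n₂ ∈ Dw.support := by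
    have hsplit := SimpleGraph.Walk.take_spec (pth hT ρ n₃) h13
    have hmem : n₂ ∈ ((pth hT ρ n₃).takeUntil n₁ h13).support ∨ n₂ ∈ Dw.support := by
      have : n₂ ∈ (((pth hT ρ n₃).takeUntil n₁ h13).append Dw).support := by
        rw [hsplit]; exact h23
      rw [SimpleGraph.Walk.mem_support_append_iff] at this
      exact this
    rcases hmem with h | h
    · rw [takeUntil_eq_pth hT ρ h13] at h
      have : n₂ = n₁ := anc_antisymm hT ρ h h12
      rw [this]
      exact SimpleGraph.Walk.start_mem_support _
    · exact h
  -- a walk within S from n₁ to n₃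
  obtain ⟨Win⟩ := hconn.preconnected ⟨n₁, h1⟩ ⟨n₃, h3⟩
  set Wt := Win.map (inclHom S) with hWt
  have hWtsupp : ∀ z ∈ Wt.support, z ∈ S := by
    intro z hz
    rw [hWt, SimpleGraph.Walk.support_map, List.mem_map] at hz
    obtain ⟨⟨z', hz'⟩, _, rfl⟩ := hz
    exact hz'
  have hbypass : Wt.bypass.IsPath := SimpleGraph.Walk.bypass_isPath Wt
  have huniq := hT.IsAcyclic.path_unique ⟨Wt.bypass, hbypass⟩ ⟨Dw, hDpath⟩
  have hval : Wt.bypass = Dw := congrArg Subtype.val huniq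
  have : n₂ ∈ Wt.bypass.support := by rw [hval]; exact hn2
  exact hWtsupp n₂ (SimpleGraph.Walk.support_bypass_subset Wt this)

/-- A nonempty connected set of nodes has a top (an element which is an ancestor
of all elements). -/
lemma exists_top {S : Set ιT} (hne : S.Nonempty) (hconn : (T.induce S).Connected) :
    ∃ m ∈ S, ∀ z ∈ S, anc hT ρ m z := by
  classical
  have hinene : (dpt hT ρ '' S).Nonempty := hne.image _
  have hmem := Nat.sInf_mem hinene
  obtain ⟨m, hmS, hmd⟩ := hmem
  refine ⟨m, hmS, ?_⟩
  have key : ∀ (p q : ↥S) (w : (T.induce S).Walk p q), anc hT ρ m ↑p → anc hT ρ m ↑q := by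
    intro p q w
    induction w with
    | nil => exact id
    | @cons a b c h w ihw =>
        intro hma
        refine ihw ?_
        have he : T.Adj ↑a ↑b := h
        rcases edge_dichotomy hT ρ he with ⟨h1, _⟩ | ⟨h1, hd⟩
        · exact anc_trans hT ρ hma h1
        · -- b is the parent of a
          have hb : (↑b : ιT) ≠ ρ → True := fun _ => trivial
          have haρ : (↑a : ιT) ≠ ρ := by
            rintro hc
            rw [hc] at hd
            have hz : dpt hT ρ ρ = 0 := by
              show (pth hT ρ ρ).length = 0
              rw [pth_root]
              rfl
            omega
          obtain ⟨w', e', hdec⟩ := parent_decomp hT ρ haρ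
          -- w' is the parent; show w' = b
          have hww : dpt hT ρ ↑a = dpt hT ρ w' + 1 := by
            show (pth hT ρ ↑a).length = (pth hT ρ w').length + 1
            rw [hdec, SimpleGraph.Walk.length_concat]
          have hbw : anc hT ρ ↑b ↑a := h1
          have hcomp := (support_parent hT ρ e' hdec ↑b).1 hbw
          rcases hcomp with hcase | hcase
          · -- b is an ancestor of w', and by depth equality b = w'
            have : (↑b : ιT) = w' := anc_eq_of_dpt_eq hT ρ hcase (by
              have := dpt_le_of_anc hT ρ hcase
              omega)
            subst this
            -- m ∈ support of pth a = support pth b ++ [a]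
            have := (support_parent hT ρ e' hdec m).1 hma
            rcases this with h2 | h2
            · exact h2
            · -- m = a; then dpt b < dpt m, contradicting minimality since b ∈ S
              exfalso
              subst h2
              have hbS : (↑b : ιT) ∈ S := b.2
              have : dpt hT ρ ↑b ∈ dpt hT ρ '' S := ⟨↑b, hbS, rfl⟩
              have hge := Nat.sInf_le this
              omega
          · -- b = a impossible since adjacent
            exact absurd hcase.symm he.ne
  intro z hz
  obtain ⟨W⟩ := hconn.preconnected ⟨m, hmS⟩ ⟨z, hz⟩
  exact key _ _ W (anc_refl hT ρ m)


lemma dpt_root : dpt hT ρ ρ = 0 := by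
  show (pth hT ρ ρ).length = 0
  rw [pth_root]
  rfl

lemma eq_root_of_dpt_eq_zero {x : ιT} (h : dpt hT ρ x = 0) : ρ = x :=
  SimpleGraph.Walk.eq_of_length_eq_zero h

lemma anc_parent {x w : ιT} (e : T.Adj w x) (h : pth hT ρ x = (pth hT ρ w).concat e) :
    anc hT ρ w x := by
  rw [anc, (support_parent hT ρ e h w)]
  exact Or.inl (SimpleGraph.Walk.end_mem_support _)

/-- There is an ancestor at every depth below. -/
lemma exists_anc_at_depth : ∀ (n : ℕ) (x : ιT) (m : ℕ), dpt hT ρ x = n → m ≤ n →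
    ∃ x', anc hT ρ x' x ∧ dpt hT ρ x' = m := by
  intro n
  induction n using Nat.strong_induction_on with
  | _ n ih =>
    intro x m hdx hm
    rcases Nat.eq_or_lt_of_le hm with heq | hlt
    · exact ⟨x, anc_refl hT ρ x, by omega⟩
    · have hxρ : x ≠ ρ := by
        rintro rfl
        rw [dpt_root] at hdx
        omega
      obtain ⟨w, e, hdec⟩ := parent_decomp hT ρ hxρ
      have hdw : dpt hT ρ x = dpt hT ρ w + 1 := by
        show (pth hT ρ x).length = (pth hT ρ w).length + 1
        rw [hdec, SimpleGraph.Walk.length_concat]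
      obtain ⟨x', hx'1, hx'2⟩ := ih (dpt hT ρ w) (by omega) w m rfl (by omega)
      exact ⟨x', anc_trans hT ρ hx'1 (anc_parent hT ρ e hdec), hx'2⟩

end Tree



section Proj
variable {ι κ : Type} {ℓ : ℕ} (H : SimpleGraph ι) (L : SimpleGraph κ)

lemma prod_adj_H {p q : (ι × κ) × Fin ℓ}
    (h : (H ⊠ L ⊠ (completeGraph (Fin ℓ))).Adj p q) :
    p.1.1 = q.1.1 ∨ H.Adj p.1.1 q.1.1 := by
  obtain ⟨-, h1, -⟩ := show _ ∧ _ ∧ _ from h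
  rcases h1 with h1 | h1
  · exact Or.inl (congrArg Prod.fst h1)
  · exact h1.2.1

lemma prod_adj_L {p q : (ι × κ) × Fin ℓ}
    (h : (H ⊠ L ⊠ (completeGraph (Fin ℓ))).Adj p q) :
    p.1.2 = q.1.2 ∨ L.Adj p.1.2 q.1.2 := by
  obtain ⟨-, h1, -⟩ := show _ ∧ _ ∧ _ from h
  rcases h1 with h1 | h1
  · exact Or.inl (congrArg Prod.snd h1)
  · exact h1.2.2

lemma projH (S : Set ((ι × κ) × Fin ℓ)) :
    ∀ {p q : ↥S} (w : ((H ⊠ L ⊠ (completeGraph (Fin ℓ))).induce S).Walk p q),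
    ∃ wh : H.Walk (↑p : (ι × κ) × Fin ℓ).1.1 (↑q : (ι × κ) × Fin ℓ).1.1,
      wh.length ≤ w.length ∧ ∀ u ∈ wh.support, ∃ z ∈ S, ((z : (ι × κ) × Fin ℓ)).1.1 = u := by
  intro p q w
  induction w with
  | @nil pp =>
      refine ⟨SimpleGraph.Walk.nil, by simp, ?_⟩
      intro u hu
      simp only [SimpleGraph.Walk.support_nil, List.mem_singleton] at hu
      subst hu
      exact ⟨↑pp, pp.2, rfl⟩
  | @cons a b c h w ih =>
      obtain ⟨wh, hlen, hsupp⟩ := ih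
      have hadj : (H ⊠ L ⊠ (completeGraph (Fin ℓ))).Adj ↑a ↑b := h
      rcases prod_adj_H H L hadj with heq | hadj'
      · refine ⟨wh.copy heq.symm rfl, ?_, ?_⟩
        · rw [SimpleGraph.Walk.length_copy, SimpleGraph.Walk.length_cons]
          omega
        · intro u hu
          rw [SimpleGraph.Walk.support_copy] at hu
          exact hsupp u hu
      · refine ⟨SimpleGraph.Walk.cons hadj' wh, ?_, ?_⟩
        · rw [SimpleGraph.Walk.length_cons, SimpleGraph.Walk.length_cons]
          omega
        · intro u hu
          rw [SimpleGraph.Walk.support_cons] at hu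
          rcases List.mem_cons.1 hu with hu | hu
          · exact ⟨↑a, a.2, hu ▸ rfl⟩
          · exact hsupp u hu

lemma projL (S : Set ((ι × κ) × Fin ℓ)) :
    ∀ {p q : ↥S} (w : ((H ⊠ L ⊠ (completeGraph (Fin ℓ))).induce S).Walk p q),
    ∃ wl : L.Walk (↑p : (ι × κ) × Fin ℓ).1.2 (↑q : (ι × κ) × Fin ℓ).1.2,
      wl.length ≤ w.length := by
  intro p q w
  induction w with
  | nil => exact ⟨SimpleGraph.Walk.nil, by simp⟩
  | @cons a b c h w ih =>
      obtain ⟨wl, hlen⟩ := ih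
      have hadj : (H ⊠ L ⊠ (completeGraph (Fin ℓ))).Adj ↑a ↑b := h
      rcases prod_adj_L H L hadj with heq | hadj'
      · refine ⟨wl.copy heq.symm rfl, ?_⟩
        rw [SimpleGraph.Walk.length_copy, SimpleGraph.Walk.length_cons]
        omega
      · refine ⟨SimpleGraph.Walk.cons hadj' wl, ?_⟩
        rw [SimpleGraph.Walk.length_cons, SimpleGraph.Walk.length_cons]
        omega

end Proj

end ShallowAux

/-- If `G` is an `r`-shallow minor of `H ⊠ L ⊠ K_ℓ` where `H` has treewidth at most `t`
and `Δ(L^r) ≤ k`, then `G` is contained in `J ⊠ L^{2r+1} ⊠ K_{ℓ(k+1)}` for some graph `J`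
of treewidth at most `C(2r+1+t, t) − 1`. -/
theorem main_shallow_product_structure {V ι κ : Type} (G : SimpleGraph V)
    (H : SimpleGraph ι) (L : SimpleGraph κ) (r t k ℓ : ℕ)
    (htw : TreewidthLE H t) (hdeg : MaxDegLE (powG L r) k)
    (hm : ShallowMinor G (H ⊠ L ⊠ (completeGraph (Fin ℓ))) r) :
    ∃ (σ : Type) (J : SimpleGraph σ),
      TreewidthLE J (Nat.choose (2 * r + 1 + t) t - 1) ∧
      Contains G (J ⊠ (powG L (2 * r + 1)) ⊠ (completeGraph (Fin (ℓ * (k + 1))))) := by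
  classical
  obtain ⟨μ, hμconn, hμcent, hμdisj, hμadj⟩ := hm
  obtain ⟨ιT, T, W, ⟨hTree, hEC, hConn⟩, hBags⟩ := htw
  letI : DecidableEq ιT := Classical.decEq _
  obtain ⟨ρ⟩ : Nonempty ιT := hTree.isConnected.nonempty
  -- tops of vertex node-sets in the tree decomposition of H
  have htop : ∀ u : ι, ∃ m, (u ∈ W m) ∧ ∀ z, u ∈ W z → ShallowAux.anc hTree ρ m z := by
    intro u
    have hne : ({x | u ∈ W x}).Nonempty := by
      obtain ⟨⟨x, hx⟩⟩ := (hConn u).nonempty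
      exact ⟨x, hx⟩
    obtain ⟨m, hm1, hm2⟩ := ShallowAux.exists_top hTree ρ hne (hConn u)
    exact ⟨m, hm1, fun z hz => hm2 z hz⟩
  choose tp htp1 htp2 using htop
  -- comparability of tops of adjacent vertices of H
  have hcompadj : ∀ {u v : ι}, H.Adj u v →
      ShallowAux.anc hTree ρ (tp u) (tp v) ∨ ShallowAux.anc hTree ρ (tp v) (tp u) := by
    intro u v huv
    obtain ⟨n, hn1, hn2⟩ := hEC huv
    exact ShallowAux.anc_comparable hTree ρ (ShallowAux.dpt hTree ρ n) n _ _ rfl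
      (htp2 u n hn1) (htp2 v n hn2)
  have hK1 : ∀ {u v : ι}, H.Adj u v → ShallowAux.anc hTree ρ (tp v) (tp u) → v ∈ W (tp u) := by
    intro u v huv hanc
    obtain ⟨n, hn1, hn2⟩ := hEC huv
    exact ShallowAux.convex_of_connected hTree ρ (hConn v) hanc (htp2 u n hn1) (htp1 v) hn2
  -- model data
  choose cent hcent using hμcent
  set yv : V → κ := fun v => (↑(cent v) : (ι × κ) × Fin ℓ).1.2 with hyv
  set Bv : V → Set ι := fun v => (fun p : (ι × κ) × Fin ℓ => p.1.1) '' (μ v) with hBv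
  have hcentwalk : ∀ (v : V) (p : ↥(μ v)),
      ∃ w : ((H ⊠ L ⊠ completeGraph (Fin ℓ)).induce (μ v)).Walk (cent v) p, w.length ≤ r := by
    intro v p
    obtain ⟨w, hw⟩ := ((hμconn v).preconnected (cent v) p).exists_walk_length_eq_dist
    exact ⟨w, by rw [hw]; exact hcent v p⟩
  have hBvwalk : ∀ (v : V) {h1 h2 : ι}, h1 ∈ Bv v → h2 ∈ Bv v →
      ∃ wh : H.Walk h1 h2, wh.length ≤ 2*r ∧ ∀ u ∈ wh.support, u ∈ Bv v := by
    intro v h1 h2 hh1 hh2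
    obtain ⟨p1, hp1, hp1e⟩ := hh1
    obtain ⟨p2, hp2, hp2e⟩ := hh2
    obtain ⟨w1, hw1⟩ := hcentwalk v ⟨p1, hp1⟩
    obtain ⟨w2, hw2⟩ := hcentwalk v ⟨p2, hp2⟩
    obtain ⟨wh1, hl1, hs1⟩ := ShallowAux.projH H L (μ v) w1
    obtain ⟨wh2, hl2, hs2⟩ := ShallowAux.projH H L (μ v) w2
    refine ⟨(wh1.reverse.append wh2).copy hp1e hp2e, ?_, ?_⟩
    · rw [SimpleGraph.Walk.length_copy, SimpleGraph.Walk.length_append,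
        SimpleGraph.Walk.length_reverse]
      omega
    · intro u hu
      rw [SimpleGraph.Walk.support_copy] at hu
      rw [SimpleGraph.Walk.mem_support_append_iff] at hu
      rcases hu with hu | hu
      · rw [SimpleGraph.Walk.support_reverse, List.mem_reverse] at hu
        obtain ⟨z, hz, hze⟩ := hs1 u hu
        exact ⟨z, hz, hze⟩
      · obtain ⟨z, hz, hze⟩ := hs2 u hu
        exact ⟨z, hz, hze⟩
  set nodesB : V → Set ιT := fun v => {x | ∃ h', h' ∈ Bv v ∧ h' ∈ W x} with hnodesB
  -- lifting reachability along set inclusion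
  have hlift : ∀ {S S' : Set ιT} (hss : S ⊆ S') {x y : ιT} (hx : x ∈ S) (hy : y ∈ S),
      (T.induce S).Reachable ⟨x, hx⟩ ⟨y, hy⟩ →
        (T.induce S').Reachable ⟨x, hss hx⟩ ⟨y, hss hy⟩ := by
    intro S S' hss x y hx hy hr
    exact hr.map (T.induceHomOfLE hss).toHom
  -- connectivity of nodesB
  have hkey : ∀ (v : V) {h1 h2 : ι} (wh : H.Walk h1 h2), (∀ u ∈ wh.support, u ∈ Bv v) →
      ∀ {x y : ιT} (hx' : x ∈ nodesB v) (hy' : y ∈ nodesB v),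
        h1 ∈ W x → h2 ∈ W y →
        (T.induce (nodesB v)).Reachable ⟨x, hx'⟩ ⟨y, hy'⟩ := by
    intro v h1 h2 wh
    induction wh with
    | @nil u =>
        intro hsupp x y hx' hy' hx hy
        have huB : u ∈ Bv v := hsupp u (SimpleGraph.Walk.start_mem_support _)
        have hsub : {z | u ∈ W z} ⊆ nodesB v := fun z hz => ⟨u, huB, hz⟩
        have := hlift hsub hx hy ((hConn u).preconnected ⟨x, hx⟩ ⟨y, hy⟩)
        exact this
    | @cons a b c e wh' ih =>
        intro hsupp x y hx' hy' hx hy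
        obtain ⟨n, hn1, hn2⟩ := hEC e
        have haB : a ∈ Bv v := hsupp a (SimpleGraph.Walk.start_mem_support _)
        have hbB : b ∈ Bv v := hsupp b
          (by rw [SimpleGraph.Walk.support_cons]; exact List.mem_cons_of_mem _ wh'.start_mem_support)
        have hsub : {z | a ∈ W z} ⊆ nodesB v := fun z hz => ⟨a, haB, hz⟩
        have hnmem : n ∈ nodesB v := ⟨a, haB, hn1⟩
        have r1 : (T.induce (nodesB v)).Reachable ⟨x, hx'⟩ ⟨n, hnmem⟩ := by
          have := hlift hsub hx hn1 ((hConn a).preconnected ⟨x, hx⟩ ⟨n, hn1⟩)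
          exact this
        have r2 : (T.induce (nodesB v)).Reachable ⟨n, hnmem⟩ ⟨y, hy'⟩ :=
          ih (fun u hu => hsupp u
              (by rw [SimpleGraph.Walk.support_cons]; exact List.mem_cons_of_mem _ hu))
            hnmem hy' hn2 hy
        exact r1.trans r2
  have hnodesBne : ∀ v : V, (nodesB v).Nonempty := by
    intro v
    have hc : (↑(cent v) : (ι × κ) × Fin ℓ).1.1 ∈ Bv v := ⟨↑(cent v), (cent v).2, rfl⟩
    exact ⟨tp _, ⟨_, hc, htp1 _⟩⟩
  have hnodesBconn : ∀ v : V, (T.induce (nodesB v)).Connected := by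
    intro v
    rw [SimpleGraph.connected_iff]
    constructor
    · rintro ⟨x, hx⟩ ⟨y, hy⟩
      obtain ⟨h1, hh1, hxW⟩ := hx
      obtain ⟨h2, hh2, hyW⟩ := hy
      obtain ⟨wh, _, hsupp⟩ := hBvwalk v hh1 hh2
      exact hkey v wh hsupp ⟨h1, hh1, hxW⟩ ⟨h2, hh2, hyW⟩ hxW hyW
    · obtain ⟨x, hx⟩ := hnodesBne v
      exact ⟨⟨x, hx⟩⟩
  -- top node of each branch set and the special vertex
  have hτex : ∀ v : V, ∃ m ∈ nodesB v, ∀ z ∈ nodesB v, ShallowAux.anc hTree ρ m z :=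
    fun v => ShallowAux.exists_top hTree ρ (hnodesBne v) (hnodesBconn v)
  choose τ hτmem hτanc using hτex
  have hstarex : ∀ v : V, ∃ h', h' ∈ Bv v ∧ h' ∈ W (τ v) := fun v => hτmem v
  choose hstar hstar1 hstar2 using hstarex
  have htpstar : ∀ v : V, tp (hstar v) = τ v := fun v =>
    ShallowAux.anc_antisymm hTree ρ (htp2 _ _ (hstar2 v))
      (hτanc v _ ⟨hstar v, hstar1 v, htp1 _⟩)
  -- the graph J
  refine ⟨{a : ι // ∃ v, hstar v = a},
    { Adj := fun a b => a ≠ b ∧ ∃ u v, G.Adj u v ∧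
        ((hstar u = ↑a ∧ hstar v = ↑b) ∨ (hstar u = ↑b ∧ hstar v = ↑a)),
      symm := by
        constructor
        rintro a b ⟨hne, u, v, huv, hor⟩
        exact ⟨hne.symm, u, v, huv, hor.symm⟩,
      loopless := ⟨fun a h => h.1 rfl⟩ }, ?_, ?_⟩
  · -- treewidth bound for J
    refine ⟨ιT, T, fun x => {a | ∃ v, hstar v = ↑a ∧ x ∈ nodesB v}, ⟨hTree, ?_, ?_⟩, ?_⟩
    · -- edge cover
      rintro a b ⟨hne, u, v, huv, hor⟩
      have hcommon : ∃ x, x ∈ nodesB u ∧ x ∈ nodesB v := by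
        obtain ⟨p, hp, q, hq, hpq⟩ := hμadj huv
        rcases ShallowAux.prod_adj_H H L hpq with heq | hadj
        · refine ⟨tp p.1.1, ⟨p.1.1, ⟨p, hp, rfl⟩, htp1 _⟩, ⟨q.1.1, ⟨q, hq, rfl⟩, ?_⟩⟩
          rw [← heq]
          exact htp1 _
        · obtain ⟨n, hn1, hn2⟩ := hEC hadj
          exact ⟨n, ⟨p.1.1, ⟨p, hp, rfl⟩, hn1⟩, ⟨q.1.1, ⟨q, hq, rfl⟩, hn2⟩⟩
      obtain ⟨x, hxu, hxv⟩ := hcommon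
      rcases hor with ⟨h1, h2⟩ | ⟨h1, h2⟩
      · exact ⟨x, ⟨u, h1, hxu⟩, ⟨v, h2, hxv⟩⟩
      · exact ⟨x, ⟨v, h2, hxv⟩, ⟨u, h1, hxu⟩⟩
    · -- connectivity of each label's node set
      intro a
      rw [SimpleGraph.connected_iff]
      constructor
      · rintro ⟨x, hx⟩ ⟨y, hy⟩
        obtain ⟨v₁, hv₁, hx1⟩ := hx
        obtain ⟨v₂, hv₂, hy1⟩ := hy
        have hsub1 : nodesB v₁ ⊆ {i | ∃ v, hstar v = ↑a ∧ i ∈ nodesB v} :=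
          fun z hz => ⟨v₁, hv₁, hz⟩
        have hsub2 : nodesB v₂ ⊆ {i | ∃ v, hstar v = ↑a ∧ i ∈ nodesB v} :=
          fun z hz => ⟨v₂, hv₂, hz⟩
        have r1 := hlift hsub1 hx1 (hτmem v₁)
          ((hnodesBconn v₁).preconnected ⟨x, hx1⟩ ⟨τ v₁, hτmem v₁⟩)
        have r2 := hlift hsub2 hy1 (hτmem v₂)
          ((hnodesBconn v₂).preconnected ⟨y, hy1⟩ ⟨τ v₂, hτmem v₂⟩)
        have hττ : τ v₁ = τ v₂ := by
          rw [← htpstar v₁, ← htpstar v₂, hv₁, hv₂]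
        have hmid : (⟨τ v₁, hsub1 (hτmem v₁)⟩ :
            ↥{i | ∃ v, hstar v = ↑a ∧ i ∈ nodesB v}) = ⟨τ v₂, hsub2 (hτmem v₂)⟩ :=
          Subtype.ext hττ
        exact r1.trans (hmid ▸ r2.symm)
      · obtain ⟨v₀, hv₀⟩ := a.2
        exact ⟨⟨τ v₀, ⟨v₀, by rw [hv₀], hτmem v₀⟩⟩⟩
    · -- bag sizes
      intro x
      set ptx : ι → Set ℕ := fun u =>
        {n | ∃ x', ShallowAux.anc hTree ρ x' x ∧ ShallowAux.dpt hTree ρ x' = n ∧ u ∈ W x'}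
        with hptx
      set av : ι → ℕ := fun u => ShallowAux.dpt hTree ρ (tp u) with hav
      have Hconv : ∀ l n m, n ∈ ptx l → av l ≤ m → m ≤ n → m ∈ ptx l := by
        rintro l n m ⟨x₁, hx₁a, hx₁d, hx₁W⟩ hm1 hm2
        have havl : av l = ShallowAux.dpt hTree ρ (tp l) := rfl
        obtain ⟨x₂, hx₂a, hx₂d⟩ := ShallowAux.exists_anc_at_depth hTree ρ
          (ShallowAux.dpt hTree ρ x₁) x₁ m rfl (by omega)
        refine ⟨x₂, ShallowAux.anc_trans hTree ρ hx₂a hx₁a, hx₂d, ?_⟩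
        rcases ShallowAux.anc_comparable hTree ρ (ShallowAux.dpt hTree ρ x₁) x₁ (tp l) x₂ rfl
            (htp2 l x₁ hx₁W) hx₂a with hc | hc
        · exact ShallowAux.convex_of_connected hTree ρ (hConn l) hc hx₂a (htp1 l) hx₁W
        · have h1 := ShallowAux.dpt_le_of_anc hTree ρ hc
          have hx2tp : x₂ = tp l := ShallowAux.anc_eq_of_dpt_eq hTree ρ hc (by omega)
          rw [hx2tp]
          exact htp1 l
      have Hcov : ∀ n, ({l | n ∈ ptx l}).Finite ∧ ({l | n ∈ ptx l}).ncard ≤ t+1 := by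
        intro n
        by_cases hex : ∃ x', ShallowAux.anc hTree ρ x' x ∧ ShallowAux.dpt hTree ρ x' = n
        · obtain ⟨x', hx'a, hx'd⟩ := hex
          have hseteq : {l | n ∈ ptx l} = W x' := by
            ext l
            constructor
            · rintro ⟨x'', h1, h2, h3⟩
              have hxx : x'' = x' := by
                rcases ShallowAux.anc_comparable hTree ρ (ShallowAux.dpt hTree ρ x) x x'' x'
                    rfl h1 hx'a with hc | hc
                · exact ShallowAux.anc_eq_of_dpt_eq hTree ρ hc (by omega)
                · exact (ShallowAux.anc_eq_of_dpt_eq hTree ρ hc (by omega)).symm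
              rwa [hxx] at h3
            · intro hl
              exact ⟨x', hx'a, hx'd, hl⟩
          rw [hseteq]
          exact hBags x'
        · have hempty : {l | n ∈ ptx l} = ∅ := by
            ext l
            simp only [Set.mem_setOf_eq, Set.mem_empty_iff_false, iff_false]
            rintro ⟨x', h1, h2, -⟩
            exact hex ⟨x', h1, h2⟩
          rw [hempty]
          simp
      have hmem_base : ∀ (u : ι) (m n : ℕ), n ∈ ptx u → u ∈ ShallowAux.REACH ptx av m n := by
        intro u m n h
        cases m with
        | zero => exact h
        | succ m => exact Or.inl h
      have REC : ∀ {w a : ι} (q : H.Walk w a), ∀ (m : ℕ), q.length ≤ m →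
          (∀ u ∈ q.support, ShallowAux.anc hTree ρ (tp a) (tp u)) →
          ∀ z : ιT, ShallowAux.anc hTree ρ z x → ShallowAux.anc hTree ρ (tp a) z →
          (ShallowAux.anc hTree ρ z (tp w) ∨ w ∈ W z) →
          a ∈ ShallowAux.REACH ptx av m (ShallowAux.dpt hTree ρ z) := by
        intro w a q
        induction q with
        | @nil u =>
            intro m _ hsupp z hzx haz hH
            rcases hH with hH | hH
            · have hzu : z = tp u := ShallowAux.anc_antisymm hTree ρ hH haz
              refine hmem_base u m _ ⟨z, hzx, rfl, ?_⟩
              rw [hzu]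
              exact htp1 u
            · exact hmem_base u m _ ⟨z, hzx, rfl, hH⟩
        | @cons w w₁ a e q' ih =>
            intro m hlen hsupp z hzx haz hH
            obtain ⟨m', rfl⟩ : ∃ m', m = m' + 1 := by
              rcases m with _ | m'
              · rw [SimpleGraph.Walk.length_cons] at hlen; omega
              · exact ⟨m', rfl⟩
            rw [SimpleGraph.Walk.length_cons] at hlen
            have hsupp' : ∀ u ∈ q'.support, ShallowAux.anc hTree ρ (tp a) (tp u) := fun u hu =>
              hsupp u (by rw [SimpleGraph.Walk.support_cons]; exact List.mem_cons_of_mem _ hu)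
            have hwsupp : ShallowAux.anc hTree ρ (tp a) (tp w) :=
              hsupp w (SimpleGraph.Walk.start_mem_support _)
            rcases hH with hH | hH
            · rcases hcompadj e with hc | hc
              · have hres := ih m' (by omega) hsupp' z hzx haz
                  (Or.inl (ShallowAux.anc_trans hTree ρ hH hc))
                exact ShallowAux.REACH_mono ptx av m' _ hres
              · rcases ShallowAux.anc_comparable hTree ρ (ShallowAux.dpt hTree ρ (tp w)) (tp w)
                    z (tp w₁) rfl hH hc with hc2 | hc2
                · have hres := ih m' (by omega) hsupp' z hzx haz (Or.inl hc2)
                  exact ShallowAux.REACH_mono ptx av m' _ hres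
                · have hw1 : w₁ ∈ W (tp w) := hK1 e hc
                  have hw1z : w₁ ∈ W z :=
                    ShallowAux.convex_of_connected hTree ρ (hConn w₁) hc2 hH (htp1 w₁) hw1
                  have hres := ih m' (by omega) hsupp' z hzx haz (Or.inr hw1z)
                  exact ShallowAux.REACH_mono ptx av m' _ hres
            · have hanc_tw_z : ShallowAux.anc hTree ρ (tp w) z := htp2 w z hH
              have hstep : a ∈ ShallowAux.REACH ptx av m' (ShallowAux.dpt hTree ρ (tp w)) := by
                rcases hcompadj e with hc | hc
                · exact ih m' (by omega) hsupp' (tp w)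
                    (ShallowAux.anc_trans hTree ρ hanc_tw_z hzx) hwsupp (Or.inl hc)
                · have hw1 : w₁ ∈ W (tp w) := hK1 e hc
                  exact ih m' (by omega) hsupp' (tp w)
                    (ShallowAux.anc_trans hTree ρ hanc_tw_z hzx) hwsupp (Or.inr hw1)
              by_cases hzeq : tp w = z
              · rw [← hzeq]
                exact ShallowAux.REACH_mono ptx av m' _ hstep
              · refine Or.inr ?_
                simp only [Set.mem_iUnion]
                exact ⟨w, ⟨⟨z, hzx, rfl, hH⟩,
                  ShallowAux.dpt_lt_of_anc_ne hTree ρ hanc_tw_z hzeq⟩, hstep⟩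
      obtain ⟨hRfin, hRcard⟩ := ShallowAux.COUNT ptx av t Hconv Hcov (2*r)
        (ShallowAux.dpt hTree ρ x)
      have himg : (fun (a : {a : ι // ∃ v, hstar v = a}) => (↑a : ι)) ''
          {a | ∃ v, hstar v = ↑a ∧ x ∈ nodesB v}
          ⊆ ShallowAux.REACH ptx av (2*r) (ShallowAux.dpt hTree ρ x) := by
        rintro b ⟨a, ⟨v, hva, hxv⟩, rfl⟩
        obtain ⟨w₀, hw₀B, hw₀W⟩ := hxv
        obtain ⟨wh, hwhl, hwhs⟩ := hBvwalk v hw₀B (hstar1 v)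
        have hsupp : ∀ u ∈ wh.support, ShallowAux.anc hTree ρ (tp (hstar v)) (tp u) := by
          intro u hu
          rw [htpstar v]
          exact hτanc v (tp u) ⟨u, hwhs u hu, htp1 u⟩
        have hres := REC wh (2*r) hwhl hsupp x (ShallowAux.anc_refl hTree ρ x)
          (by rw [htpstar v]; exact hτanc v x ⟨w₀, hw₀B, hw₀W⟩) (Or.inr hw₀W)
        show (↑a : ι) ∈ _
        rw [← hva]
        exact hres
      constructor
      · exact Set.Finite.of_finite_image (hRfin.subset himg) Subtype.val_injective.injOn
      · have h1 : ({a : {a : ι // ∃ v, hstar v = a} | ∃ v, hstar v = ↑a ∧ x ∈ nodesB v}).ncard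
            = ((fun (a : {a : ι // ∃ v, hstar v = a}) => (↑a : ι)) ''
                {a | ∃ v, hstar v = ↑a ∧ x ∈ nodesB v}).ncard :=
          (Set.ncard_image_of_injective _ Subtype.val_injective).symm
        have h2 := Set.ncard_le_ncard himg hRfin
        have h3 : Nat.choose (2*r+t+1) t = Nat.choose (2*r+1+t) t := by
          congr 1
          ring
        have h4 : 1 ≤ Nat.choose (2*r+1+t) t := Nat.choose_pos (by omega)
        have h5 : ((fun x => {a : {a : ι // ∃ v, hstar v = a} |
            ∃ v, hstar v = ↑a ∧ x ∈ nodesB v}) x).ncard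
            = ({a : {a : ι // ∃ v, hstar v = a} |
                ∃ v, hstar v = ↑a ∧ x ∈ nodesB v}).ncard := rfl
        omega
  · -- containment
    have hballfin : ∀ y : κ, ({q | q = y ∨ (powG L r).Adj y q}).Finite ∧
        ({q | q = y ∨ (powG L r).Adj y q}).ncard ≤ k + 1 := by
      intro y
      obtain ⟨hf, hc⟩ := hdeg y
      have hset : {q | q = y ∨ (powG L r).Adj y q} = insert y ((powG L r).neighborSet y) := by
        ext q
        simp only [Set.mem_setOf_eq, Set.mem_insert_iff, SimpleGraph.mem_neighborSet]
      rw [hset]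
      refine ⟨hf.insert y, le_trans (Set.ncard_insert_le _ _) (by omega)⟩
    have hφex : ∀ y : κ, ∃ φ : κ → Fin (k+1),
        Set.InjOn φ {q | q = y ∨ (powG L r).Adj y q} := by
      intro y
      obtain ⟨hfin, hcard⟩ := hballfin y
      haveI := hfin.fintype
      have hcard2 : Fintype.card ({q | q = y ∨ (powG L r).Adj y q}) ≤ Fintype.card (Fin (k+1)) := by
        rw [Fintype.card_fin, ← Set.toFinset_card, ← Set.ncard_eq_toFinset_card']
        omega
      obtain ⟨φ₀⟩ := Function.Embedding.nonempty_of_card_le hcard2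
      refine ⟨fun q => if hq : q ∈ {q | q = y ∨ (powG L r).Adj y q} then φ₀ ⟨q, hq⟩
        else φ₀ ⟨y, Or.inl rfl⟩, ?_⟩
      intro q1 h1 q2 h2 heq
      simp only [] at heq
      rw [dif_pos h1, dif_pos h2] at heq
      exact congrArg Subtype.val (φ₀.injective heq)
    choose φ hφ using hφex
    have hpvex : ∀ v : V, ∃ p : (ι × κ) × Fin ℓ, p ∈ μ v ∧ p.1.1 = hstar v := by
      intro v
      obtain ⟨p, hp, hpe⟩ := hstar1 v
      exact ⟨p, hp, hpe⟩
    choose pv hpv1 hpv2 using hpvex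
    have hballmem : ∀ (v : V) (p : (ι × κ) × Fin ℓ), p ∈ μ v →
        p.1.2 ∈ {q | q = yv v ∨ (powG L r).Adj (yv v) q} := by
      intro v p hp
      obtain ⟨w1, hw1⟩ := hcentwalk v ⟨p, hp⟩
      obtain ⟨wl, hwl⟩ := ShallowAux.projL H L (μ v) w1
      by_cases heq : (p.1.2 : κ) = yv v
      · exact Or.inl heq
      · exact Or.inr ⟨fun hc => heq hc.symm, wl, by omega⟩
    set f : V → (({a : ι // ∃ v, hstar v = a} × κ) × Fin (ℓ*(k+1))) := fun v =>
      ((⟨hstar v, ⟨v, rfl⟩⟩, yv v),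
        finCongr (by ring : (k+1)*ℓ = ℓ*(k+1))
          (finProdFinEquiv (φ (yv v) ((pv v).1.2), (pv v).2))) with hfdef
    have hinj : Function.Injective f := by
      intro u v huv
      have h1 : hstar u = hstar v := congrArg (fun w => ((w.1.1 :
        {a : ι // ∃ v, hstar v = a}) : ι)) huv
      have h2 : yv u = yv v := congrArg (fun w => w.1.2) huv
      have h3 : finCongr (by ring : (k+1)*ℓ = ℓ*(k+1))
            (finProdFinEquiv (φ (yv u) ((pv u).1.2), (pv u).2))
          = finCongr (by ring : (k+1)*ℓ = ℓ*(k+1))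
            (finProdFinEquiv (φ (yv v) ((pv v).1.2), (pv v).2)) :=
        congrArg Prod.snd huv
      have h4 : (φ (yv u) ((pv u).1.2), (pv u).2) = (φ (yv v) ((pv v).1.2), (pv v).2) :=
        finProdFinEquiv.injective ((finCongr _).injective h3)
      have h5 : (pv u).2 = (pv v).2 := congrArg (fun z : Fin (k+1) × Fin ℓ => z.2) h4
      have h6 : φ (yv u) ((pv u).1.2) = φ (yv u) ((pv v).1.2) := by
        have h6' := congrArg (fun z : Fin (k+1) × Fin ℓ => z.1) h4
        rw [← h2] at h6'
        exact h6'
      have h7 : (pv u).1.2 = (pv v).1.2 :=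
        hφ (yv u) (hballmem u _ (hpv1 u)) (by rw [h2]; exact hballmem v _ (hpv1 v)) h6
      have h8 : pv u = pv v := by
        have h9 : (pv u).1.1 = (pv v).1.1 := by rw [hpv2 u, hpv2 v, h1]
        exact Prod.ext (Prod.ext h9 h7) h5
      by_contra hne
      exact (Set.disjoint_left.1 (hμdisj hne)) (hpv1 u) (h8 ▸ hpv1 v)
    refine ⟨f, hinj, ?_⟩
    intro u v huv
    refine ⟨fun hc => (huv.ne) (hinj hc), ?_, ?_⟩
    · by_cases h1 : (f u).1 = (f v).1
      · exact Or.inl h1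
      · refine Or.inr ⟨h1, ?_, ?_⟩
        · by_cases h2 : hstar u = hstar v
          · exact Or.inl (Subtype.ext h2)
          · refine Or.inr ⟨fun hc => h2 (congrArg Subtype.val hc), u, v, huv,
              Or.inl ⟨rfl, rfl⟩⟩
        · by_cases h2 : yv u = yv v
          · exact Or.inl h2
          · refine Or.inr ⟨h2, ?_⟩
            obtain ⟨p, hp, q, hq, hpq⟩ := hμadj huv
            obtain ⟨w1, hw1⟩ := hcentwalk u ⟨p, hp⟩
            obtain ⟨w2, hw2⟩ := hcentwalk v ⟨q, hq⟩
            obtain ⟨wl1, hwl1⟩ := ShallowAux.projL H L (μ u) w1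
            obtain ⟨wl2, hwl2⟩ := ShallowAux.projL H L (μ v) w2
            rcases ShallowAux.prod_adj_L H L hpq with heq | hadjL
            · refine ⟨wl1.append ((wl2.reverse).copy (by rw [heq]) rfl), ?_⟩
              rw [SimpleGraph.Walk.length_append, SimpleGraph.Walk.length_copy,
                SimpleGraph.Walk.length_reverse]
              omega
            · refine ⟨wl1.append (SimpleGraph.Walk.cons hadjL wl2.reverse), ?_⟩
              rw [SimpleGraph.Walk.length_append, SimpleGraph.Walk.length_cons,
                SimpleGraph.Walk.length_reverse]
              omega
    · by_cases h1 : (f u).2 = (f v).2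
      · exact Or.inl h1
      · exact Or.inr h1
end

section
/- For every graph G, every r-shallow minor H of G, and every integer s ≥ 1, the s-strong colouring number satisfies scol_s(H) ≤ scol_{2rs+2r+s}(G). -/
open SimpleGraph

variable {V W : Type}

infixl:70 " ⊠ " => strongProd

open SimpleGraph
variable {V W : Type}

/-- `R(G,⪯,v,s)`: vertices `w ⪯ v` reachable from `v` by a path of length at most `s`
whose internal vertices are all `≻ v`. -/
def RSet (G : SimpleGraph V) (le : V → V → Prop) (v : V) (s : ℕ) : Set V :=
  {w | le w v ∧ ∃ p : G.Walk v w, p.length ≤ s ∧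
    ∀ u ∈ p.support, u ≠ v → u ≠ w → (le v u ∧ u ≠ v)}

/-- `Q(G,⪯,v,s)`: vertices `w ⪯ v` reachable from `v` by a path of length at most `s`
whose internal vertices are all `≻ w`. -/
def QSet (G : SimpleGraph V) (le : V → V → Prop) (v : V) (s : ℕ) : Set V :=
  {w | le w v ∧ ∃ p : G.Walk v w, p.length ≤ s ∧
    ∀ u ∈ p.support, u ≠ v → u ≠ w → (le w u ∧ u ≠ w)}

/-- The `s`-strong colouring number of `G` is at most `c`. -/
def ScolLE (G : SimpleGraph V) (s : ℕ) (c : ℕ) : Prop :=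
  ∃ le : V → V → Prop, IsLinearOrder V le ∧
    ∀ v, (RSet G le v s).Finite ∧ (RSet G le v s).ncard ≤ c

/-- The `s`-weak colouring number of `G` is at most `c`. -/
def WcolLE (G : SimpleGraph V) (s : ℕ) (c : ℕ) : Prop :=
  ∃ le : V → V → Prop, IsLinearOrder V le ∧
    ∀ v, (QSet G le v s).Finite ∧ (QSet G le v s).ncard ≤ c

/-- The queue-number of `G` is at most `q`: there is a linear order of `V(G)` and an
assignment of edges to `q` queues such that no two edges in the same queue nest. -/
def QueueLE (G : SimpleGraph V) (q : ℕ) : Prop :=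
  ∃ le : V → V → Prop, IsLinearOrder V le ∧
    ∃ σ : V → V → ℕ,
      (∀ u v, σ u v = σ v u) ∧
      (∀ ⦃u v⦄, G.Adj u v → σ u v < q) ∧
      (∀ a b c d, G.Adj a b → G.Adj c d → σ a b = σ c d →
        (le a b ∧ a ≠ b) → (le c d ∧ c ≠ d) →
        ¬((le a c ∧ a ≠ c) ∧ (le d b ∧ d ≠ b)))

/-- A `(k,d)`-shortcut system for `G`: a set of paths of length at most `k` such that
every vertex is an internal vertex of at most `d` of the paths. -/
structure ShortcutSystem (G : SimpleGraph V) (k d : ℕ) where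
  paths : Set ((u : V) × (v : V) × G.Walk u v)
  isPath : ∀ p ∈ paths, p.2.2.IsPath
  lengthLE : ∀ p ∈ paths, p.2.2.length ≤ k
  internal : ∀ w : V,
    {p ∈ paths | w ∈ p.2.2.support ∧ w ≠ p.1 ∧ w ≠ p.2.1}.Finite ∧
    {p ∈ paths | w ∈ p.2.2.support ∧ w ≠ p.1 ∧ w ≠ p.2.1}.ncard ≤ d

/-- The supergraph `G^𝒫` of `G` obtained by adding an edge `uv` whenever `𝒫`
contains a `(u,v)`-path. -/
def shortcutGraph (G : SimpleGraph V) {k d : ℕ} (P : ShortcutSystem G k d) : SimpleGraph V where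
  Adj u v := u ≠ v ∧ (G.Adj u v ∨ ∃ p ∈ P.paths, (p.1 = u ∧ p.2.1 = v) ∨ (p.1 = v ∧ p.2.1 = u))
  symm := by
    constructor
    rintro u v ⟨h, h'⟩
    refine ⟨h.symm, ?_⟩
    rcases h' with h' | ⟨p, hp, h'⟩
    · exact Or.inl h'.symm
    · exact Or.inr ⟨p, hp, by tauto⟩
  loopless := ⟨fun v h => h.1 rfl⟩

/-- A `d`-clique lift of `G`: a choice `M v ⊆ N(v)` with `|M v| ≤ d` for each vertex `v`. -/
structure CliqueLift (G : SimpleGraph V) (d : ℕ) where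
  M : V → Set V
  subset_nbhd : ∀ v, M v ⊆ G.neighborSet v
  finite : ∀ v, (M v).Finite
  card_le : ∀ v, (M v).ncard ≤ d

/-- The graph `G^ℳ` obtained from `G` by adding the edge `uw` whenever there is a vertex `v`
with `u ∈ M v` and `w ∈ N(v)`. -/
def cliqueLiftGraph (G : SimpleGraph V) {d : ℕ} (ℳ : CliqueLift G d) : SimpleGraph V where
  Adj u w := u ≠ w ∧ (G.Adj u w ∨ ∃ v, (u ∈ ℳ.M v ∧ w ∈ G.neighborSet v) ∨
    (w ∈ ℳ.M v ∧ u ∈ G.neighborSet v))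
  symm := by
    constructor
    rintro u w ⟨h, h'⟩
    refine ⟨h.symm, ?_⟩
    rcases h' with h' | ⟨v, h'⟩
    · exact Or.inl h'.symm
    · exact Or.inr ⟨v, by tauto⟩
  loopless := ⟨fun v h => h.1 rfl⟩

/-- The `m × m` grid graph. -/
def gridGraph (m : ℕ) : SimpleGraph (Fin m × Fin m) where
  Adj a b := |(a.1 : ℤ) - b.1| + |(a.2 : ℤ) - b.2| = 1
  symm := by
    constructor
    intro a b h
    rw [abs_sub_comm ((b.1 : ℤ)), abs_sub_comm ((b.2 : ℤ))]
    exact h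
  loopless := by constructor; intro a h; simp at h


section ScolAux

open SimpleGraph

variable {V : Type} {G : SimpleGraph V}

/-- Split a walk at the first vertex satisfying `P`. -/
private lemma walk_split (P : V → Prop) :
    ∀ {v z : V} (q : G.Walk v z), (∃ x ∈ q.support, P x) →
    ∃ (x : V) (q₁ : G.Walk v x) (q₂ : G.Walk x z),
      q₁.length + q₂.length = q.length ∧ P x ∧
      (∀ u ∈ q₁.support, u ≠ x → ¬ P u) ∧
      (∀ u ∈ q₁.support, u ∈ q.support) ∧
      (∀ u ∈ q₂.support, u ∈ q.support) ∧
      (∀ u ∈ q.support, u ∈ q₁.support ∨ u ∈ q₂.support) := by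
  intro v z q
  induction q with
  | nil =>
    rintro ⟨x, hx, hPx⟩
    rw [Walk.support_nil, List.mem_singleton] at hx
    subst hx
    exact ⟨x, Walk.nil, Walk.nil, by simp, hPx, by simp, by simp, by simp,
      fun u hu => Or.inl hu⟩
  | @cons a b z' hab q ih =>
    rintro ⟨x, hx, hPx⟩
    by_cases hPa : P a
    · exact ⟨a, Walk.nil, Walk.cons hab q, by simp, hPa, by simp, by simp,
        fun u hu => hu, fun u hu => Or.inr hu⟩
    · have hx' : x ∈ q.support := by
        rw [Walk.support_cons, List.mem_cons] at hx
        rcases hx with rfl | h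
        · exact absurd hPx hPa
        · exact h
      obtain ⟨y, q₁, q₂, hlen, hPy, hfirst, hs1, hs2, hcover⟩ := ih ⟨x, hx', hPx⟩
      refine ⟨y, Walk.cons hab q₁, q₂, ?_, hPy, ?_, ?_, ?_, ?_⟩
      · simp only [Walk.length_cons]; omega
      · intro u hu huy
        rw [Walk.support_cons, List.mem_cons] at hu
        rcases hu with rfl | hu
        · exact hPa
        · exact hfirst u hu huy
      · intro u hu
        rw [Walk.support_cons, List.mem_cons] at hu
        rw [Walk.support_cons, List.mem_cons]
        rcases hu with rfl | hu
        · exact Or.inl rfl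
        · exact Or.inr (hs1 u hu)
      · intro u hu
        rw [Walk.support_cons, List.mem_cons]
        exact Or.inr (hs2 u hu)
      · intro u hu
        rw [Walk.support_cons, List.mem_cons] at hu
        rcases hu with rfl | hu
        · exact Or.inl (by rw [Walk.support_cons, List.mem_cons]; exact Or.inl rfl)
        · rcases hcover u hu with h | h
          · exact Or.inl (by rw [Walk.support_cons, List.mem_cons]; exact Or.inr h)
          · exact Or.inr h

private lemma RSet_mono (le : V → V → Prop) (v : V) {s t : ℕ} (hst : s ≤ t) :
    RSet G le v s ⊆ RSet G le v t := by
  rintro w ⟨h1, p, hp, hcond⟩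
  exact ⟨h1, p, hp.trans hst, hcond⟩

/-- Iterated "drop" sets. -/
private def Drop (G : SimpleGraph V) (le : V → V → Prop) : ℕ → V → Set V
  | 0, v => {v}
  | k+1, v => {v} ∪ ⋃ u ∈ RSet G le v (k+1), Drop G le k u

private lemma self_mem_Drop (le : V → V → Prop) (k : ℕ) (v : V) :
    v ∈ Drop G le k v := by
  cases k <;> simp [Drop]

private lemma Drop_finite (le : V → V → Prop) {L : ℕ}
    (hfin : ∀ v, (RSet G le v L).Finite) :
    ∀ k, k ≤ L → ∀ v, (Drop G le k v).Finite := by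
  intro k
  induction k with
  | zero => intro _ v; simp [Drop]
  | succ k ih =>
    intro hk v
    rw [Drop]
    exact (Set.finite_singleton v).union
      (Set.Finite.biUnion ((hfin v).subset (RSet_mono le v hk))
        (fun u _ => ih (by omega) u))

/-- On any walk of length at most `k` from `v`, the minimum vertex of the support
lies in `Drop G le k v`. -/
private lemma drop_min (le : V → V → Prop)
    (ltot : ∀ a b, le a b ∨ le b a)
    (ltrans : ∀ a b c, le a b → le b c → le a c)
    (lrefl : ∀ a, le a a) :
    ∀ (k : ℕ) {v z : V} (q : G.Walk v z), q.length ≤ k →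
    ∃ m, m ∈ Drop G le k v ∧ m ∈ q.support ∧ ∀ u ∈ q.support, le m u := by
  intro k
  induction k using Nat.strong_induction_on with
  | _ k IH =>
  intro v z q hq
  by_cases hall : ∀ u ∈ q.support, le v u
  · exact ⟨v, self_mem_Drop le k v, q.start_mem_support, hall⟩
  · push_neg at hall
    obtain ⟨u₀, hu₀, hnle⟩ := hall
    obtain ⟨x, q₁, q₂, hlen12, hPx, hfirst, _, hs2, hcover⟩ :=
      walk_split (fun x => ¬ le v x) q ⟨u₀, hu₀, hnle⟩
    have hxv : le x v := (ltot v x).resolve_left hPx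
    have hxne : x ≠ v := fun h => hPx (h ▸ lrefl v)
    have hq₁pos : 1 ≤ q₁.length := by
      rcases Nat.eq_zero_or_pos q₁.length with h0 | h
      · exact absurd (Walk.eq_of_length_eq_zero h0) (Ne.symm hxne)
      · exact h
    obtain ⟨k', rfl⟩ : ∃ k', k = k' + 1 := ⟨k - 1, by omega⟩
    have hxR : x ∈ RSet G le v (k' + 1) :=
      ⟨hxv, q₁, by omega, fun u hu hune hux => ⟨not_not.mp (hfirst u hu hux), hune⟩⟩
    obtain ⟨m, hmD, hmsup, hmlow⟩ := IH k' (by omega) q₂ (by omega)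
    refine ⟨m, ?_, hs2 m hmsup, ?_⟩
    · rw [Drop]
      exact Or.inr (Set.mem_biUnion hxR hmD)
    · intro u hu
      have hmx : le m x := hmlow x q₂.start_mem_support
      rcases hcover u hu with h1 | h2
      · by_cases hux : u = x
        · exact hux ▸ hmx
        · exact ltrans m v u (ltrans m x v hmx hxv) (not_not.mp (hfirst u h1 hux))
      · exact hmlow u h2

private noncomputable def mkLO (le : V → V → Prop) (hle : IsLinearOrder V le) :
    LinearOrder V :=
  letI pre : Preorder V :=
    { le := le
      lt := fun a b => le a b ∧ ¬ le b a
      le_refl := hle.toIsPartialOrder.toIsPreorder.toRefl.refl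
      le_trans := fun a b c => hle.toIsPartialOrder.toIsPreorder.toIsTrans.trans a b c
      lt_iff_le_not_ge := fun _ _ => Iff.rfl }
  letI par : PartialOrder V :=
    { pre with le_antisymm := fun a b => hle.toIsPartialOrder.toAntisymm.antisymm a b }
  { par with
    le_total := hle.toTotal.total
    toDecidableLE := Classical.decRel _ }

/-- A set in which every element is reachable from a fixed centre by a short walk inside
the set has a minimum, provided all `RSet`s are finite. -/
private lemma exists_branch_min (le : V → V → Prop) (hle : IsLinearOrder V le) (L : ℕ)
    (hfin : ∀ v, (RSet G le v L).Finite) (S : Set V) (ctr : V) (hctr : ctr ∈ S)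
    (hwalk : ∀ z ∈ S, ∃ q : G.Walk ctr z, q.length ≤ L ∧ ∀ x ∈ q.support, x ∈ S) :
    ∃ m, m ∈ S ∧ ∀ z ∈ S, le m z := by
  classical
  have ltot : ∀ a b, le a b ∨ le b a := hle.toTotal.total
  have ltrans : ∀ a b c, le a b → le b c → le a c :=
    fun a b c => hle.toIsPartialOrder.toIsPreorder.toIsTrans.trans a b c
  have lrefl : ∀ a, le a a := hle.toIsPartialOrder.toIsPreorder.toRefl.refl
  have hDfin : (Drop G le L ctr).Finite := Drop_finite le hfin L le_rfl ctr
  have hEfin : (Drop G le L ctr ∩ S).Finite := hDfin.subset Set.inter_subset_left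
  have hEne : (Drop G le L ctr ∩ S).Nonempty := ⟨ctr, self_mem_Drop le L ctr, hctr⟩
  letI : LinearOrder V := mkLO le hle
  obtain ⟨m, hmE, hmin⟩ := Set.exists_min_image (Drop G le L ctr ∩ S) id hEfin hEne
  refine ⟨m, hmE.2, fun z hz => ?_⟩
  obtain ⟨q, hqlen, hqsup⟩ := hwalk z hz
  obtain ⟨m', hm'D, hm'sup, hm'low⟩ := drop_min le ltot ltrans lrefl L q hqlen
  have h1 : le m m' := hmin m' ⟨hm'D, hqsup m' hm'sup⟩
  exact ltrans m m' z h1 (hm'low z q.end_mem_support)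

/-- A walk between two vertices of a connected set of radius at most `r`,
of length at most `2r`, staying inside the set. -/
private lemma inside_walk {r : ℕ} (S : Set V) (hconn : (G.induce S).Connected)
    (hrad : ∃ c : S, ∀ u : S, (G.induce S).dist c u ≤ r) (a b : V)
    (ha : a ∈ S) (hb : b ∈ S) :
    ∃ q : G.Walk a b, q.length ≤ 2 * r ∧ ∀ x ∈ q.support, x ∈ S := by
  obtain ⟨ctr, hctr⟩ := hrad
  obtain ⟨pa, hpa⟩ := (hconn.preconnected ctr ⟨a, ha⟩).exists_walk_length_eq_dist
  obtain ⟨pb, hpb⟩ := (hconn.preconnected ctr ⟨b, hb⟩).exists_walk_length_eq_dist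
  refine ⟨(pa.reverse.append pb).map (Embedding.induce S).toHom, ?_, ?_⟩
  · erw [Walk.length_map, Walk.length_append, Walk.length_reverse, hpa, hpb]
    have h1 := hctr ⟨a, ha⟩
    have h2 := hctr ⟨b, hb⟩
    omega
  · intro x hx
    erw [Walk.support_map, List.mem_map] at hx
    obtain ⟨y, _, rfl⟩ := hx
    exact y.2

end ScolAux

section LiftAux

open SimpleGraph

variable {V W : Type} {G : SimpleGraph V} {H : SimpleGraph W}

/-- Lift a walk of `H` to a walk of `G` along a shallow-minor model. -/
private lemma lift_walk (μ : W → Set V) (r : ℕ)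
    (hconn : ∀ w, (G.induce (μ w)).Connected)
    (hrad : ∀ w, ∃ c : μ w, ∀ u : μ w, (G.induce (μ w)).dist c u ≤ r)
    (hadj : ∀ ⦃w w'⦄, H.Adj w w' → ∃ u ∈ μ w, ∃ v ∈ μ w', G.Adj u v) :
    ∀ {w w' : W} (p : H.Walk w w') (a : V), a ∈ μ w → ∀ b : V, b ∈ μ w' →
    ∃ q : G.Walk a b, q.length ≤ 2 * r * (p.length + 1) + p.length ∧
      ∀ x ∈ q.support, ∃ u ∈ p.support, x ∈ μ u := by
  intro w w' p
  induction p with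
  | @nil u₀ =>
    intro a ha b hb
    obtain ⟨q, h1, h2⟩ := inside_walk (μ u₀) (hconn u₀) (hrad u₀) a b ha hb
    refine ⟨q, by simpa using h1, fun x hx => ⟨u₀, by simp, h2 x hx⟩⟩
  | @cons w w₁ w'' hadj' p' ih =>
    intro a ha b hb
    obtain ⟨a', ha', b', hb', hab⟩ := hadj hadj'
    obtain ⟨q₀, h0len, h0sup⟩ := inside_walk (μ w) (hconn w) (hrad w) a a' ha ha'
    obtain ⟨q₁, h1len, h1sup⟩ := ih b' hb' b hb
    refine ⟨q₀.append (Walk.cons hab q₁), ?_, ?_⟩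
    · rw [Walk.length_append, Walk.length_cons, Walk.length_cons]
      have hkey : 2 * r * (p'.length + 1 + 1) = 2 * r * (p'.length + 1) + 2 * r := by ring
      linarith [h0len, h1len, hkey]
    · intro x hx
      rw [Walk.mem_support_append_iff] at hx
      rcases hx with hx | hx
      · exact ⟨w, by simp, h0sup x hx⟩
      · rw [Walk.support_cons, List.mem_cons] at hx
        rcases hx with rfl | hx
        · exact ⟨w, by simp, ha'⟩
        · obtain ⟨u, hu, hxu⟩ := h1sup x hx
          exact ⟨u, by rw [Walk.support_cons, List.mem_cons]; exact Or.inr hu, hxu⟩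

end LiftAux

/-- Strong colouring numbers are well-behaved under shallow minors:
if `H` is an `r`-shallow minor of `G` then `scol_s(H) ≤ scol_{2rs+2r+s}(G)`. -/
theorem scol_shallowMinor {V W : Type} (G : SimpleGraph V) (H : SimpleGraph W)
    (r s : ℕ) (hs : 1 ≤ s) (hm : ShallowMinor H G r) (c : ℕ)
    (hc : ScolLE G (2 * r * s + 2 * r + s) c) :
    ScolLE H s c := by
  classical
  obtain ⟨μ, hconn, hrad, hdisj, hadjm⟩ := hm
  obtain ⟨le, hle, hR⟩ := hc
  set L := 2 * r * s + 2 * r + s with hLdef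
  have ltot : ∀ a b, le a b ∨ le b a := hle.toTotal.total
  have ltrans : ∀ a b c, le a b → le b c → le a c :=
    fun a b c => hle.toIsPartialOrder.toIsPreorder.toIsTrans.trans a b c
  have lrefl : ∀ a, le a a := hle.toIsPartialOrder.toIsPreorder.toRefl.refl
  have lanti : ∀ a b, le a b → le b a → a = b :=
    fun a b => hle.toIsPartialOrder.toAntisymm.antisymm a b
  have h2rL : 2 * r ≤ L := by
    rw [hLdef]; linarith [Nat.zero_le (2 * r * s), Nat.zero_le s]
  have hmin : ∀ w : W, ∃ m, m ∈ μ w ∧ ∀ z ∈ μ w, le m z := by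
    intro w
    obtain ⟨ctr, hctr⟩ := hrad w
    refine exists_branch_min le hle L (fun v => (hR v).1) (μ w) ctr.1 ctr.2 ?_
    intro z hz
    obtain ⟨q, hqlen, hqsup⟩ := inside_walk (μ w) (hconn w) ⟨ctr, hctr⟩ ctr.1 z ctr.2 hz
    exact ⟨q, hqlen.trans h2rL, hqsup⟩
  choose ρ hρmem hρmin using hmin
  have hρinj : Function.Injective ρ := by
    intro a b hab
    by_contra hne
    exact Set.disjoint_left.mp (hdisj hne) (hρmem a) (hab ▸ hρmem b)
  refine ⟨fun a b => le (ρ a) (ρ b), ?_, ?_⟩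
  · exact { refl := fun a => lrefl _,
            trans := fun a b c hab hbc => ltrans _ _ _ hab hbc,
            antisymm := fun a b h1 h2 => hρinj (lanti _ _ h1 h2),
            total := fun a b => ltot _ _ }
  · intro w
    have key : ∀ w' ∈ RSet H (fun a b => le (ρ a) (ρ b)) w s,
        ∃ x, x ∈ RSet G le (ρ w) L ∧ x ∈ μ w' := by
      rintro w' ⟨hle', p, hplen, hpcond⟩
      by_cases hww : w' = w
      · subst hww
        exact ⟨ρ w', ⟨lrefl _, Walk.nil, by simp, by simp⟩, hρmem w'⟩
      · obtain ⟨q, hqlen, hqsup⟩ :=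
          lift_walk μ r hconn hrad hadjm p (ρ w) (hρmem w) (ρ w') (hρmem w')
        have hqL : q.length ≤ L := by
          have h1 : 2 * r * (p.length + 1) + p.length ≤ 2 * r * (s + 1) + s := by
            have h0 := Nat.mul_le_mul_left (2 * r) (Nat.add_le_add_right hplen 1)
            linarith [h0, hplen]
          have h2 : 2 * r * (s + 1) + s = L := by rw [hLdef]; ring
          calc q.length ≤ 2 * r * (p.length + 1) + p.length := hqlen
            _ ≤ 2 * r * (s + 1) + s := h1
            _ = L := h2
        have hPend : ¬ le (ρ w) (ρ w') := fun h => hww (hρinj (lanti _ _ hle' h))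
        obtain ⟨x, q₁, q₂, hlen12, hPx, hfirst, hs1, _, _⟩ :=
          walk_split (fun x => ¬ le (ρ w) x) q ⟨ρ w', q.end_mem_support, hPend⟩
        have hxlow : le x (ρ w) := (ltot (ρ w) x).resolve_left hPx
        refine ⟨x, ⟨hxlow, q₁, by omega, fun u hu hune hux =>
          ⟨not_not.mp (hfirst u hu hux), hune⟩⟩, ?_⟩
        obtain ⟨u, hup, hxu⟩ := hqsup x (hs1 x q₁.end_mem_support)
        have huw : u ≠ w := by
          rintro rfl
          exact hPx (hρmin u x hxu)
        by_cases huw' : u = w'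
        · exact huw' ▸ hxu
        · exfalso
          obtain ⟨hwu, _⟩ := hpcond u hup huw huw'
          have h2 : le (ρ u) (ρ w) := ltrans _ _ _ (hρmin u x hxu) hxlow
          exact huw (hρinj (lanti _ _ h2 hwu))
    set S := RSet H (fun a b => le (ρ a) (ρ b)) w s with hS
    choose f hf using key
    obtain ⟨φ, hφ⟩ : ∃ φ : W → V, ∀ w' ∈ S, φ w' ∈ RSet G le (ρ w) L ∧ φ w' ∈ μ w' := by
      refine ⟨fun w' => if h : w' ∈ S then f w' h else ρ w', fun w' h => ?_⟩
      simpa only [dif_pos h] using hf w' h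
    have hinj : Set.InjOn φ S := by
      intro a ha b hb hab
      by_contra hne
      exact Set.disjoint_left.mp (hdisj hne) (hφ a ha).2 (hab ▸ (hφ b hb).2)
    have himg : φ '' S ⊆ RSet G le (ρ w) L := by
      rintro _ ⟨a, ha, rfl⟩; exact (hφ a ha).1
    have hTfin := (hR (ρ w)).1
    have hSfin : S.Finite := Set.Finite.of_finite_image (hTfin.subset himg) hinj
    refine ⟨hSfin, ?_⟩
    calc S.ncard = (φ '' S).ncard := (Set.ncard_image_of_injOn hinj).symm
      _ ≤ (RSet G le (ρ w) L).ncard := Set.ncard_le_ncard himg hTfin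
      _ ≤ c := (hR (ρ w)).2
end

section
/- For every graph G, every r-shallow minor H of G, and every integer s ≥ 1, the s-weak colouring number satisfies wcol_s(H) ≤ wcol_{2rs+2r+s}(G). -/
open SimpleGraph

variable {V W : Type}

infixl:70 " ⊠ " => strongProd

open SimpleGraph
variable {V W : Type}

/-- In a connected induced subgraph of radius ≤ r, any two vertices are joined by a
walk of length ≤ 2r staying inside the set. -/
lemma exists_walk_in_set {V : Type} (G : SimpleGraph V) (S : Set V) (r : ℕ)
    (hconn : (G.induce S).Connected)
    (hrad : ∃ c : S, ∀ u : S, (G.induce S).dist c u ≤ r)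
    {y z : V} (hy : y ∈ S) (hz : z ∈ S) :
    ∃ p : G.Walk y z, p.length ≤ 2 * r ∧ ∀ x ∈ p.support, x ∈ S := by
  obtain ⟨c, hc⟩ := hrad
  obtain ⟨p1, hp1⟩ := (hconn.preconnected c ⟨y, hy⟩).exists_walk_length_eq_dist
  obtain ⟨p2, hp2⟩ := (hconn.preconnected c ⟨z, hz⟩).exists_walk_length_eq_dist
  refine ⟨(p1.reverse.append p2).map (Embedding.induce S).toHom, ?_, ?_⟩
  · show ((p1.reverse.append p2).map (Embedding.induce S).toHom).length ≤ 2 * r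
    rw [Walk.length_map, Walk.length_append, Walk.length_reverse, hp1, hp2]
    have h1 := hc ⟨y, hy⟩
    have h2 := hc ⟨z, hz⟩
    omega
  · intro x hx
    change x ∈ ((p1.reverse.append p2).map (Embedding.induce S).toHom).support at hx
    rw [Walk.support_map] at hx
    obtain ⟨a, -, rfl⟩ := List.mem_map.mp hx
    exact a.2


set_option maxHeartbeats 1000000 in
/-- Weak colouring numbers are well-behaved under shallow minors:
if `H` is an `r`-shallow minor of `G` then `wcol_s(H) ≤ wcol_{2rs+2r+s}(G)`. -/
theorem wcol_shallowMinor {V W : Type} (G : SimpleGraph V) (H : SimpleGraph W)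
    (r s : ℕ) (hs : 1 ≤ s) (hm : ShallowMinor H G r) (c : ℕ)
    (hc : WcolLE G (2 * r * s + 2 * r + s) c) :
    WcolLE H s c := by
  classical
  obtain ⟨μ, hconn, hrad, hdisj, hAdj⟩ := hm
  obtain ⟨le, hlin, hQ⟩ := hc
  set K := 2 * r * s + 2 * r + s with hK
  letI : LinearOrder V :=
    { le := le
      le_refl := fun a => hlin.toIsPartialOrder.toIsPreorder.toRefl.refl a
      le_trans := fun a b c => hlin.toIsPartialOrder.toIsPreorder.toIsTrans.trans a b c
      le_antisymm := fun a b => hlin.toIsPartialOrder.toAntisymm.antisymm a b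
      le_total := fun a b => hlin.toTotal.total a b
      toDecidableLE := fun a b => Classical.dec _ }
  -- Every branch set has a minimum element.
  have hmin : ∀ w : W, ∃ m ∈ μ w, ∀ y ∈ μ w, le m y := by
    intro w
    obtain ⟨⟨z₀, hz₀⟩, -⟩ := hrad w
    have hz₀Q : z₀ ∈ QSet G le z₀ K := by
      refine ⟨le_refl z₀, Walk.nil, by simp, ?_⟩
      intro u hu hne _
      simp only [Walk.support_nil, List.mem_singleton] at hu
      exact absurd hu hne
    have hF : (QSet G le z₀ K ∩ μ w).Finite := (hQ z₀).1.inter_of_left _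
    obtain ⟨m, hm, hmle⟩ := Set.exists_min_image _ id hF ⟨z₀, hz₀Q, hz₀⟩
    refine ⟨m, hm.2, ?_⟩
    intro y hy
    obtain ⟨p, hpl, hps⟩ := exists_walk_in_set G (μ w) r (hconn w) (hrad w) hz₀ hy
    -- minimum of the support of p
    have hfin : {x | x ∈ p.support}.Finite := p.support.finite_toSet
    obtain ⟨my, hmy, hmyle⟩ := Set.exists_min_image _ id hfin ⟨z₀, p.start_mem_support⟩
    have hmyQ : my ∈ QSet G le z₀ K := by
      refine ⟨hmyle z₀ p.start_mem_support, p.takeUntil my hmy, ?_, ?_⟩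
      · have := p.length_takeUntil_le hmy
        omega
      · intro u hu hne1 hne2
        exact ⟨hmyle u (p.support_takeUntil_subset hmy hu), hne2⟩
    have : le m my := hmle my ⟨hmyQ, hps my hmy⟩
    exact hlin.toIsPartialOrder.toIsPreorder.toIsTrans.trans _ _ _ this
      (hmyle y p.end_mem_support)
  choose x hxmem hxmin using hmin
  have hxinj : Function.Injective x := by
    intro w1 w2 h
    by_contra hne
    exact (hdisj hne).ne_of_mem (hxmem w1) (h ▸ hxmem w2) rfl
  -- the order on W
  set le' : W → W → Prop := fun w1 w2 => le (x w1) (x w2) with hle'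
  have ltrans : ∀ {a b c : V}, le a b → le b c → le a c :=
    fun h1 h2 => hlin.toIsPartialOrder.toIsPreorder.toIsTrans.trans _ _ _ h1 h2
  have hlin' : IsLinearOrder W le' :=
    { refl := fun a => hlin.toIsPartialOrder.toIsPreorder.toRefl.refl (x a)
      trans := fun a b c hab hbc => ltrans hab hbc
      antisymm := fun a b hab hba =>
        hxinj (hlin.toIsPartialOrder.toAntisymm.antisymm _ _ hab hba)
      total := fun a b => hlin.toTotal.total (x a) (x b) }
  -- lifting walks
  have lift : ∀ (a b : W) (q : H.Walk a b) (y : V), y ∈ μ a →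
      ∃ P : G.Walk y (x b), P.length ≤ 2 * r + (2 * r + 1) * q.length ∧
        ∀ z ∈ P.support, ∃ u ∈ q.support, z ∈ μ u := by
    intro a b q
    induction q with
    | nil =>
      rename_i a
      intro y hy
      obtain ⟨p, hpl, hps⟩ := exists_walk_in_set G (μ a) r (hconn a) (hrad a) hy (hxmem a)
      refine ⟨p, by simpa using hpl, ?_⟩
      intro z hz
      exact ⟨a, by simp, hps z hz⟩
    | cons h q ih =>
      rename_i u₁ u₂ u₃
      intro y hy
      obtain ⟨uu, huu, vv, hvv, hadj⟩ := hAdj h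
      obtain ⟨p1, hp1l, hp1s⟩ := exists_walk_in_set G (μ u₁) r (hconn u₁) (hrad u₁) hy huu
      obtain ⟨P2, hP2l, hP2s⟩ := ih vv hvv
      refine ⟨p1.append (Walk.cons hadj P2), ?_, ?_⟩
      · rw [Walk.length_append, Walk.length_cons, Walk.length_cons]
        have : (2 * r + 1) * (q.length + 1) = (2 * r + 1) * q.length + 2 * r + 1 := by ring
        omega
      · intro z hz
        rw [Walk.mem_support_append_iff] at hz
        rcases hz with hz | hz
        · exact ⟨u₁, by simp [Walk.support_cons], hp1s z hz⟩
        · rw [Walk.support_cons, List.mem_cons] at hz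
          rcases hz with hzeq | hz
          · exact ⟨u₁, by simp [Walk.support_cons], by rw [hzeq]; exact huu⟩
          · obtain ⟨u', hu', hz'⟩ := hP2s z hz
            exact ⟨u', by simp [Walk.support_cons, List.mem_cons]; tauto, hz'⟩
  refine ⟨le', hlin', ?_⟩
  intro v
  -- image of QSet H under x lands in QSet G
  have himg : x '' QSet H le' v s ⊆ QSet G le (x v) K := by
    rintro _ ⟨w', ⟨hle'w, q, hql, hqint⟩, rfl⟩
    obtain ⟨P, hPl, hPs⟩ := lift v w' q (x v) (hxmem v)
    refine ⟨hle'w, P, ?_, ?_⟩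
    · have h1 : (2 * r + 1) * q.length ≤ (2 * r + 1) * s := Nat.mul_le_mul_left _ hql
      have h2 : (2 * r + 1) * s = 2 * r * s + s := by ring
      omega
    · intro z hz hne1 hne2
      obtain ⟨u, hu, hzu⟩ := hPs z hz
      refine ⟨?_, hne2⟩
      by_cases huv : u = v
      · exact ltrans (hle'w : le (x w') (x v)) (huv ▸ hxmin u z hzu)
      · by_cases huw : u = w'
        · exact huw ▸ hxmin u z hzu
        · obtain ⟨hw'u, -⟩ := hqint u hu huv huw
          exact ltrans (hw'u : le (x w') (x u)) (hxmin u z hzu)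
  have hfinG : (QSet G le (x v) K).Finite := (hQ (x v)).1
  have hfin : (QSet H le' v s).Finite :=
    Set.Finite.of_finite_image (hfinG.subset himg) (hxinj.injOn)
  refine ⟨hfin, ?_⟩
  calc (QSet H le' v s).ncard = (x '' QSet H le' v s).ncard :=
        (Set.ncard_image_of_injective _ hxinj).symm
    _ ≤ (QSet G le (x v) K).ncard := Set.ncard_le_ncard himg hfinG
    _ ≤ c := (hQ (x v)).2
end
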